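/- arXiv:1810.10114 — 4 statements merged into one kernel-verified Lean document; each statement's English description precedes it below -/
import Mathlib

section
/- Fix integers n ≥ 2 and L ≥ 1 and a node u in {1,…,n}. In the homogeneous binary MAG M(n;L), the degree D_{n,L}(u) of node u has a compound binomial distribution: for all 0 ≤ d ≤ n−1 and 0 ≤ ℓ ≤ L, P(D_{n,L}(u) = d and S_L(u) = ℓ) = C(L,ℓ) μ(1)^ℓ μ(0)^{L−ℓ} · C(n−1,d) (Γ(1)^ℓ Γ(0)^{L−ℓ})^d (1 − Γ(1)^ℓ Γ(0)^{L−ℓ})^{n−1−d}; equivalently, S_L(u) is Binomial(L, μ(1)) and, conditionally on S_L(u) = ℓ, the rv D_{n,L}(u) is Binomial(n−1, Γ(1)^ℓ Γ(0)^{L−ℓ}). -/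
open MeasureTheory ProbabilityTheory Filter Real
open scoped ENNReal NNReal

noncomputable section

namespace MagAux

def rec2 (u : ℕ) (p : ℕ × ℕ) : ℕ := if p.1 = u then p.2 else p.1

def cellSets (u : ℕ) (a : ℕ → ℕ) (b : ℕ → ℕ → ℕ) (t : ℕ → ℝ) (T : Finset ℕ) :
    (ℕ × ℕ) ⊕ {p : ℕ × ℕ // p.1 < p.2} → Set ℝ
  | Sum.inl p => if p.2 = u then {((a p.1 : ℕ) : ℝ)} else {((b p.2 p.1 : ℕ) : ℝ)}
  | Sum.inr p => if rec2 u p.1 ∈ T then Set.Iic (t (rec2 u p.1)) else (Set.Iic (t (rec2 u p.1)))ᶜ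

@[simp] lemma cellSets_inl (u : ℕ) (a : ℕ → ℕ) (b : ℕ → ℕ → ℕ) (t : ℕ → ℝ) (T : Finset ℕ)
    (p : ℕ × ℕ) :
    cellSets u a b t T (Sum.inl p)
      = if p.2 = u then {((a p.1 : ℕ) : ℝ)} else {((b p.2 p.1 : ℕ) : ℝ)} := rfl

@[simp] lemma cellSets_inr (u : ℕ) (a : ℕ → ℕ) (b : ℕ → ℕ → ℕ) (t : ℕ → ℝ) (T : Finset ℕ)
    (p : {p : ℕ × ℕ // p.1 < p.2}) :
    cellSets u a b t T (Sum.inr p)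
      = if rec2 u p.1 ∈ T then Set.Iic (t (rec2 u p.1)) else (Set.Iic (t (rec2 u p.1)))ᶜ := rfl

variable {Ω : Type*} [MeasurableSpace Ω]

lemma cell_prob (P : Measure Ω) [IsProbabilityMeasure P]
    (A : ℕ → ℕ → Ω → ℕ) (U : ℕ → ℕ → Ω → ℝ)
    (hUsym : ∀ u v, U v u = U u v)
    (hindep : iIndepFun (m := fun _ => (inferInstance : MeasurableSpace ℝ))
      (Sum.elim (fun p : ℕ × ℕ => fun ω => ((A p.1 p.2 ω : ℕ) : ℝ))
        (fun p : {p : ℕ × ℕ // p.1 < p.2} => U p.1.1 p.1.2)) P)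
    (s V : Finset ℕ) (u : ℕ) (huV : u ∉ V)
    (a : ℕ → ℕ) (b : ℕ → ℕ → ℕ) (t : ℕ → ℝ) (T : Finset ℕ) :
    P ((⋂ k ∈ s, {ω | A k u ω = a k}) ∩
        ⋂ v ∈ V, ((⋂ k ∈ s, {ω | A k v ω = b v k}) ∩
          (if v ∈ T then {ω | U u v ω ≤ t v} else {ω | U u v ω ≤ t v}ᶜ))) =
      (∏ k ∈ s, P {ω | A k u ω = a k}) *
        ∏ v ∈ V, ((∏ k ∈ s, P {ω | A k v ω = b v k}) *
          P (if v ∈ T then {ω | U u v ω ≤ t v} else {ω | U u v ω ≤ t v}ᶜ)) := by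
  classical
  have hvu : ∀ v ∈ V, u ≠ v := fun v hv h => huV (h ▸ hv)
  have hrec : ∀ v ∈ V, rec2 u (min u v, max u v) = v := by
    intro v hv
    rcases lt_or_gt_of_ne (hvu v hv) with h | h
    · simp [rec2, min_eq_left h.le, max_eq_right h.le]
    · simp [rec2, min_eq_right h.le, max_eq_left h.le, (hvu v hv).symm]
  have hUmm : ∀ v ∈ V, U (min u v) (max u v) = U u v := by
    intro v hv
    rcases le_total u v with h | h
    · simp [min_eq_left h, max_eq_right h]
    · simp [min_eq_right h, max_eq_left h, hUsym]
  set f2 : {x // x ∈ V} → (ℕ × ℕ) ⊕ {p : ℕ × ℕ // p.1 < p.2} :=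
    fun v => Sum.inr ⟨(min u v.1, max u v.1), min_lt_max.mpr (hvu v.1 v.2)⟩ with hf2
  set S : Finset ((ℕ × ℕ) ⊕ {p : ℕ × ℕ // p.1 < p.2}) :=
    ((s ×ˢ insert u V).image Sum.inl) ∪ V.attach.image f2 with hS
  have hmeas : ∀ i ∈ S, MeasurableSet (cellSets u a b t T i) := by
    intro i _
    rcases i with p | p
    · rw [cellSets_inl]; split_ifs <;> exact measurableSet_singleton _
    · rw [cellSets_inr]; split_ifs
      · exact measurableSet_Iic
      · exact measurableSet_Iic.compl
  have key := hindep.measure_inter_preimage_eq_mul S hmeas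
  have hset : (⋂ i ∈ S, (Sum.elim (fun p : ℕ × ℕ => fun ω => ((A p.1 p.2 ω : ℕ) : ℝ))
        (fun p : {p : ℕ × ℕ // p.1 < p.2} => U p.1.1 p.1.2)) i ⁻¹' cellSets u a b t T i)
      = ((⋂ k ∈ s, {ω | A k u ω = a k}) ∩
        ⋂ v ∈ V, ((⋂ k ∈ s, {ω | A k v ω = b v k}) ∩
          (if v ∈ T then {ω | U u v ω ≤ t v} else {ω | U u v ω ≤ t v}ᶜ))) := by
    rw [hS, Finset.set_biInter_inter, Finset.set_biInter_finset_image,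
      Finset.set_biInter_finset_image]
    ext ω
    simp only [Set.mem_inter_iff, Set.mem_iInter, Set.mem_preimage, Sum.elim_inl, Sum.elim_inr,
      Finset.mem_product, Finset.mem_insert, Finset.mem_attach, cellSets_inl, cellSets_inr,
      Set.mem_setOf_eq, true_implies, Subtype.forall, hf2]
    constructor
    · rintro ⟨h1, h2⟩
      refine ⟨fun k hk => ?_, fun v hv => ⟨fun k hk => ?_, ?_⟩⟩
      · have h := h1 (k, u) ⟨hk, Or.inl rfl⟩
        simpa using h
      · have h := h1 (k, v) ⟨hk, Or.inr hv⟩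
        rw [if_neg (fun hh => hvu v hv hh.symm)] at h
        simpa using h
      · have h := h2 v hv
        rw [hrec v hv, hUmm v hv] at h
        by_cases hT : v ∈ T
        · simpa [hT] using h
        · simpa [hT] using h
    · rintro ⟨h1, h2⟩
      refine ⟨fun p hp => ?_, fun v hv => ?_⟩
      · obtain ⟨hk, hw⟩ := hp
        by_cases hpu : p.2 = u
        · rw [if_pos hpu, Set.mem_singleton_iff, hpu, Nat.cast_inj]
          exact h1 p.1 hk
        · have hv : p.2 ∈ V := hw.resolve_left hpu
          rw [if_neg hpu, Set.mem_singleton_iff, Nat.cast_inj]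
          exact (h2 p.2 hv).1 p.1 hk
      · have h3 := (h2 v hv).2
        rw [hrec v hv, hUmm v hv]
        by_cases hT : v ∈ T
        · rw [if_pos hT]; simpa [hT] using h3
        · rw [if_neg hT]; simpa [hT] using h3
  have hdisj : Disjoint ((s ×ˢ insert u V).image Sum.inl) (V.attach.image f2) := by
    simp only [Finset.disjoint_left, Finset.mem_image, hf2]
    rintro x ⟨p, _, rfl⟩ ⟨v, _, h⟩
    cases h
  have hinj1 : ∀ x ∈ s ×ˢ insert u V, ∀ y ∈ s ×ˢ insert u V,
      (Sum.inl x : (ℕ × ℕ) ⊕ {p : ℕ × ℕ // p.1 < p.2}) = Sum.inl y → x = y := by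
    intro x _ y _ h; injection h
  have hinj2 : ∀ x ∈ V.attach, ∀ y ∈ V.attach, f2 x = f2 y → x = y := by
    intro x _ y _ h
    simp only [hf2, Sum.inr.injEq, Subtype.mk.injEq, Prod.mk.injEq] at h
    obtain ⟨h1, h2⟩ := h
    have h3 : u + (x : ℕ) = u + (y : ℕ) := by
      rw [← min_add_max u (x : ℕ), ← min_add_max u (y : ℕ), h1, h2]
    exact Subtype.ext (by omega)
  rw [hset] at key
  rw [key, hS, Finset.prod_union hdisj, Finset.prod_image hinj1, Finset.prod_image hinj2]
  have hpreA : ∀ k w (c : ℕ),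
      (fun ω => ((A k w ω : ℕ) : ℝ)) ⁻¹' {(c : ℝ)} = {ω | A k w ω = c} := by
    intro k w c; ext ω; simp
  simp only [Sum.elim_inl, Sum.elim_inr, cellSets_inl, cellSets_inr, hf2]
  have hprod1 : (∏ p ∈ s ×ˢ insert u V, P ((fun ω => ((A p.1 p.2 ω : ℕ) : ℝ)) ⁻¹'
      (if p.2 = u then {((a p.1 : ℕ) : ℝ)} else {((b p.2 p.1 : ℕ) : ℝ)})))
      = (∏ k ∈ s, P {ω | A k u ω = a k}) * ∏ v ∈ V, ∏ k ∈ s, P {ω | A k v ω = b v k} := by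
    calc (∏ p ∈ s ×ˢ insert u V, P ((fun ω => ((A p.1 p.2 ω : ℕ) : ℝ)) ⁻¹'
          (if p.2 = u then ({((a p.1 : ℕ) : ℝ)} : Set ℝ) else {((b p.2 p.1 : ℕ) : ℝ)})))
        = ∏ w ∈ insert u V, ∏ k ∈ s, P ((fun ω => ((A k w ω : ℕ) : ℝ)) ⁻¹'
          (if w = u then ({((a k : ℕ) : ℝ)} : Set ℝ) else {((b w k : ℕ) : ℝ)})) :=
        Finset.prod_product_right' s (insert u V) (fun k w =>
          P ((fun ω => ((A k w ω : ℕ) : ℝ)) ⁻¹'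
            (if w = u then ({((a k : ℕ) : ℝ)} : Set ℝ) else {((b w k : ℕ) : ℝ)})))
      _ = _ := ?_
    rw [Finset.prod_insert huV]
    congr 1
    · exact Finset.prod_congr rfl fun k hk => by rw [if_pos rfl, hpreA]
    · refine Finset.prod_congr rfl fun w hw => Finset.prod_congr rfl fun k hk => ?_
      rw [if_neg (fun h : w = u => huV (h ▸ hw)), hpreA]
  have hprod2 : (∏ v ∈ V.attach, P (U (u ⊓ v.1) (u ⊔ v.1) ⁻¹'
      (if rec2 u (u ⊓ v.1, u ⊔ v.1) ∈ T then Set.Iic (t (rec2 u (u ⊓ v.1, u ⊔ v.1)))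
        else (Set.Iic (t (rec2 u (u ⊓ v.1, u ⊔ v.1))))ᶜ)))
      = ∏ v ∈ V, P (if v ∈ T then {ω | U u v ω ≤ t v} else {ω | U u v ω ≤ t v}ᶜ) := by
    rw [← Finset.prod_attach V
      (fun v => P (if v ∈ T then {ω | U u v ω ≤ t v} else {ω | U u v ω ≤ t v}ᶜ))]
    refine Finset.prod_congr rfl fun v _ => ?_
    rw [hrec v.1 v.2, hUmm v.1 v.2]
    congr 1
    by_cases hT : v.1 ∈ T
    · rw [if_pos hT, if_pos hT]; rfl
    · rw [if_neg hT, if_neg hT, Set.preimage_compl]; rfl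
  rw [hprod1, hprod2, Finset.prod_mul_distrib, mul_assoc]


lemma measure_eq_sum_partition {ι : Type*} (P : Measure Ω) {F : Finset ι}
    {C : ι → Set Ω} {E : Set Ω} (hE : MeasurableSet E)
    (hC : ∀ i ∈ F, MeasurableSet (C i))
    (hdisj : ∀ i ∈ F, ∀ j ∈ F, i ≠ j → Disjoint (C i) (C j))
    (hcover : ∀ ω, ∃ i ∈ F, ω ∈ C i) :
    P E = ∑ i ∈ F, P (E ∩ C i) := by
  have hEq : E = ⋃ i ∈ F, E ∩ C i := by
    ext ω
    simp only [Set.mem_iUnion, Set.mem_inter_iff]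
    constructor
    · intro hω
      obtain ⟨i, hi, hci⟩ := hcover ω
      exact ⟨i, hi, hω, hci⟩
    · rintro ⟨i, _, hω, _⟩
      exact hω
  have hpd : (↑F : Set ι).PairwiseDisjoint fun i => E ∩ C i := by
    intro i hi j hj hij
    exact ((hdisj i hi j hj hij).mono Set.inter_subset_right Set.inter_subset_right)
  conv_lhs => rw [hEq]
  exact measure_biUnion_finset hpd fun i hi => hE.inter (hC i hi)

lemma prod_ite_split {M : Type*} [CommMonoid M] {s J : Finset ℕ} (hJ : J ⊆ s) (f g : ℕ → M) :
    ∏ k ∈ s, (if k ∈ J then f k else g k) = (∏ k ∈ J, f k) * ∏ k ∈ s \ J, g k := by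
  classical
  have h1 : s = J ∪ (s \ J) := (Finset.union_sdiff_of_subset hJ).symm
  conv_lhs => rw [h1]
  rw [Finset.prod_union Finset.disjoint_sdiff]
  congr 1
  · exact Finset.prod_congr rfl fun k hk => if_pos hk
  · exact Finset.prod_congr rfl fun k hk => if_neg (Finset.mem_sdiff.mp hk).2

def chi (K : Finset ℕ) (k : ℕ) : ℕ := if k ∈ K then 1 else 0

lemma chi_le_one (K : Finset ℕ) (k : ℕ) : chi K k ≤ 1 := by
  unfold chi; split_ifs <;> omega

end MagAux

open MagAux

/-- in the homogeneous binary MAG `M(n;L)`, the degree `D_{n,L}(u)`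
of a node `u` has a compound binomial distribution: jointly with the number
`S_L(u)` of attributes of `u` equal to one,
`P(D = d, S = ℓ) = C(L,ℓ) μ1^ℓ μ0^{L-ℓ} · C(n-1,d) (Γ1^ℓ Γ0^{L-ℓ})^d (1 - Γ1^ℓ Γ0^{L-ℓ})^{n-1-d}`;
i.e. `S_L(u)` is `Bin(L, μ1)` and, given `S_L(u) = ℓ`, `D_{n,L}(u)` is
`Bin(n-1, Γ1^ℓ Γ0^{L-ℓ})`.  Nodes are `{1,…,n}`, attributes are labeled `1,…,L`,
`A ℓ u` is the `ℓ`-th (binary, `{0,1}`-valued) attribute of node `u`,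
`U u v` are the uniform variables, the two families being mutually independent,
and the edge indicator between `u` and `v` is `1{U(u,v) ≤ ∏_{ℓ=1}^L q(A_ℓ(u), A_ℓ(v))}`. -/
theorem stmt0 {Ω : Type*} [MeasurableSpace Ω] (P : Measure Ω) [IsProbabilityMeasure P]
    (μ0 μ1 : ℝ) (hμ0 : μ0 ∈ Set.Ioo (0:ℝ) 1) (hμ1 : μ1 ∈ Set.Ioo (0:ℝ) 1)
    (hμ : μ0 + μ1 = 1)
    (q : ℕ → ℕ → ℝ)
    (hq : ∀ a ≤ 1, ∀ b ≤ 1, q a b ∈ Set.Ioo (0:ℝ) 1)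
    (hqsym : q 0 1 = q 1 0)
    (A : ℕ → ℕ → Ω → ℕ) (U : ℕ → ℕ → Ω → ℝ)
    (hAmeas : ∀ ℓ u, Measurable (A ℓ u))
    (hUmeas : ∀ u v, Measurable (U u v))
    (hA01 : ∀ ℓ u ω, A ℓ u ω ≤ 1)
    (hA1 : ∀ ℓ u, P {ω | A ℓ u ω = 1} = ENNReal.ofReal μ1)
    (hU : ∀ u v : ℕ, u < v →
      P.map (U u v) = (volume.restrict (Set.Ioo (0:ℝ) 1)))
    (hUsym : ∀ u v, U v u = U u v)
    (hUdiag : ∀ u ω, U u u ω = 1)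
    (hindep : iIndepFun (m := fun _ => (inferInstance : MeasurableSpace ℝ))
      (Sum.elim (fun p : ℕ × ℕ => fun ω => ((A p.1 p.2 ω : ℕ) : ℝ))
        (fun p : {p : ℕ × ℕ // p.1 < p.2} => U p.1.1 p.1.2)) P)
    (n L : ℕ) (hn : 2 ≤ n) (hL : 1 ≤ L) (u : ℕ) (hu : u ∈ Finset.Icc 1 n) :
    ∀ d ≤ n - 1, ∀ ℓ ≤ L,
      P {ω | (∑ v ∈ (Finset.Icc 1 n).erase u,
            (if U u v ω ≤ ∏ k ∈ Finset.Icc 1 L, q (A k u ω) (A k v ω) then 1 else 0)) = d ∧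
          (∑ k ∈ Finset.Icc 1 L, A k u ω) = ℓ} =
        ENNReal.ofReal ((L.choose ℓ : ℝ) * μ1 ^ ℓ * μ0 ^ (L - ℓ) *
          ((n - 1).choose d : ℝ) *
          ((μ0 * q 1 0 + μ1 * q 1 1) ^ ℓ * (μ0 * q 0 0 + μ1 * q 0 1) ^ (L - ℓ)) ^ d *
          (1 - (μ0 * q 1 0 + μ1 * q 1 1) ^ ℓ *
            (μ0 * q 0 0 + μ1 * q 0 1) ^ (L - ℓ)) ^ (n - 1 - d)) := by
  
  classical
  intro d hd ℓ hℓ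
  obtain ⟨hμ0p, hμ0l⟩ := hμ0
  obtain ⟨hμ1p, hμ1l⟩ := hμ1
  have hq00 := hq 0 (by norm_num) 0 (by norm_num)
  have hq01 := hq 0 (by norm_num) 1 (le_refl 1)
  have hq10 := hq 1 (le_refl 1) 0 (by norm_num)
  have hq11 := hq 1 (le_refl 1) 1 (le_refl 1)
  set s : Finset ℕ := Finset.Icc 1 L with hsdef
  set V : Finset ℕ := (Finset.Icc 1 n).erase u with hVdef
  set g1 : ℝ := μ0 * q 1 0 + μ1 * q 1 1 with hg1def
  set g0 : ℝ := μ0 * q 0 0 + μ1 * q 0 1 with hg0def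
  set p : ℝ := g1 ^ ℓ * g0 ^ (L - ℓ) with hpdef
  -- scalar facts
  have hg1m : 0 < g1 ∧ g1 < 1 := by
    constructor <;> nlinarith [hq10.1, hq10.2, hq11.1, hq11.2]
  have hg0m : 0 < g0 ∧ g0 < 1 := by
    constructor <;> nlinarith [hq00.1, hq00.2, hq01.1, hq01.2]
  have hppos : 0 < p := mul_pos (pow_pos hg1m.1 _) (pow_pos hg0m.1 _)
  have hple : p ≤ 1 := by
    have h1 : g1 ^ ℓ ≤ 1 := pow_le_one₀ hg1m.1.le hg1m.2.le
    have h0 : g0 ^ (L - ℓ) ≤ 1 := pow_le_one₀ hg0m.1.le hg0m.2.le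
    nlinarith [pow_pos hg1m.1 ℓ, pow_pos hg0m.1 (L - ℓ)]
  -- finset facts
  have hscard : s.card = L := by rw [hsdef, Nat.card_Icc]; omega
  have hsne : s.Nonempty := by rw [hsdef]; exact Finset.nonempty_Icc.mpr hL
  have hVcard : V.card = n - 1 := by
    rw [hVdef, Finset.card_erase_of_mem hu, Nat.card_Icc]; omega
  have huV : u ∉ V := by rw [hVdef]; exact Finset.notMem_erase u _
  have hsumchi : ∀ K : Finset ℕ, K ⊆ s → ∑ k ∈ s, chi K k = K.card := by
    intro K hK
    unfold chi
    rw [Finset.sum_ite_mem, Finset.inter_eq_right.mpr hK, Finset.sum_const, smul_eq_mul, mul_one]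
  -- measurability blocks
  have hAm : ∀ k w (c : ℕ), MeasurableSet {ω | A k w ω = c} :=
    fun k w c => hAmeas k w (measurableSet_singleton c)
  have hqA : ∀ (f : ℕ → ℕ) v, Measurable fun ω => ∏ k ∈ s, q (f k) (A k v ω) := by
    intro f v
    refine Finset.measurable_prod _ fun k _ => ?_
    exact (measurable_of_countable fun c : ℕ => q (f k) c).comp (hAmeas k v)
  have hqAA : ∀ v, Measurable fun ω => ∏ k ∈ s, q (A k u ω) (A k v ω) := by
    intro v
    refine Finset.measurable_prod _ fun k _ => ?_
    exact (measurable_of_countable fun c : ℕ × ℕ => q c.1 c.2).comp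
      ((hAmeas k u).prodMk (hAmeas k v))
  -- elementary probabilities
  have hA0 : ∀ k w, P {ω | A k w ω = 0} = ENNReal.ofReal μ0 := by
    intro k w
    have hcomp : {ω | A k w ω = 0} = {ω | A k w ω = 1}ᶜ := by
      ext ω
      simp only [Set.mem_setOf_eq, Set.mem_compl_iff]
      have := hA01 k w ω
      omega
    rw [hcomp, prob_compl_eq_one_sub (hAm k w 1), hA1, ← ENNReal.ofReal_one,
      ← ENNReal.ofReal_sub 1 hμ1p.le]
    congr 1
    linarith
  have hAchi : ∀ (K : Finset ℕ) k w,
      P {ω | A k w ω = chi K k} = ENNReal.ofReal (if k ∈ K then μ1 else μ0) := by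
    intro K k w
    by_cases h : k ∈ K
    · simp only [chi, if_pos h]
      exact hA1 k w
    · simp only [chi, if_neg h]
      exact hA0 k w
  have hUmm : ∀ v ∈ V, U (min u v) (max u v) = U u v := by
    intro v hv
    rcases le_total u v with h | h
    · simp [min_eq_left h, max_eq_right h]
    · simp [min_eq_right h, max_eq_left h, hUsym]
  have hUprob : ∀ v ∈ V, ∀ t : ℝ, t ∈ Set.Ioo (0:ℝ) 1 →
      P {ω | U u v ω ≤ t} = ENNReal.ofReal t := by
    intro v hv t ht
    have hneq : u ≠ v := fun h => huV (h ▸ hv)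
    have hmm : min u v < max u v := min_lt_max.mpr hneq
    have h1 : {ω | U u v ω ≤ t} = U (min u v) (max u v) ⁻¹' Set.Iic t := by
      rw [hUmm v hv]; rfl
    rw [h1, ← Measure.map_apply (hUmeas _ _) measurableSet_Iic, hU _ _ hmm,
      Measure.restrict_apply measurableSet_Iic]
    have h2 : Set.Iic t ∩ Set.Ioo 0 1 = Set.Ioc 0 t := by
      ext x
      simp only [Set.mem_inter_iff, Set.mem_Iic, Set.mem_Ioo, Set.mem_Ioc]
      constructor
      · rintro ⟨ha, hb, hc⟩; exact ⟨hb, ha⟩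
      · rintro ⟨ha, hb⟩; exact ⟨hb, ha, lt_of_le_of_lt hb ht.2⟩
    rw [h2, Real.volume_Ioc, sub_zero]
  have hUmS : ∀ (K : Finset ℕ) v, MeasurableSet {ω | U u v ω ≤ ∏ k ∈ s, q (chi K k) (A k v ω)} :=
    fun K v => measurableSet_le (hUmeas u v) (hqA (chi K) v)
  have hUprobC : ∀ v ∈ V, ∀ t : ℝ, t ∈ Set.Ioo (0:ℝ) 1 →
      P {ω | U u v ω ≤ t}ᶜ = ENNReal.ofReal (1 - t) := by
    intro v hv t ht
    rw [prob_compl_eq_one_sub (measurableSet_le (hUmeas u v) measurable_const),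
      hUprob v hv t ht, ← ENNReal.ofReal_one, ← ENNReal.ofReal_sub 1 ht.1.le]
  -- QQ facts
  have hQQm : ∀ K J : Finset ℕ, (∏ k ∈ s, q (chi K k) (chi J k)) ∈ Set.Ioo (0:ℝ) 1 := by
    intro K J
    constructor
    · exact Finset.prod_pos fun k _ => (hq _ (chi_le_one K k) _ (chi_le_one J k)).1
    · calc ∏ k ∈ s, q (chi K k) (chi J k) < ∏ k ∈ s, 1 :=
            Finset.prod_lt_prod_of_nonempty
              (fun k _ => (hq _ (chi_le_one K k) _ (chi_le_one J k)).1)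
              (fun k _ => (hq _ (chi_le_one K k) _ (chi_le_one J k)).2) hsne
        _ = 1 := Finset.prod_const_one
  have hprodμ : ∀ K : Finset ℕ, K ⊆ s → K.card = ℓ →
      (∏ k ∈ s, if k ∈ K then μ1 else μ0) = μ1 ^ ℓ * μ0 ^ (L - ℓ) := by
    intro K hK hKc
    rw [prod_ite_split hK, Finset.prod_const, Finset.prod_const, Finset.card_sdiff_of_subset hK,
      hscard, hKc]
  have hxnn : ∀ J : Finset ℕ, 0 ≤ ∏ k ∈ s, (if k ∈ J then μ1 else μ0) :=
    fun J => Finset.prod_nonneg fun k _ => by split_ifs <;> linarith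
  -- real resummation identities
  have hR1 : ∀ K : Finset ℕ, K ⊆ s → K.card = ℓ →
      ∑ J ∈ s.powerset, (∏ k ∈ s, if k ∈ J then μ1 else μ0) *
        (∏ k ∈ s, q (chi K k) (chi J k)) = p := by
    intro K hK hKc
    have step : ∀ J ∈ s.powerset, (∏ k ∈ s, if k ∈ J then μ1 else μ0) *
        (∏ k ∈ s, q (chi K k) (chi J k)) =
        (∏ k ∈ J, μ1 * q (chi K k) 1) * ∏ k ∈ s \ J, μ0 * q (chi K k) 0 := by
      intro J hJ
      rw [← Finset.prod_mul_distrib]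
      have : ∀ k ∈ s, (if k ∈ J then μ1 else μ0) * q (chi K k) (chi J k) =
          (if k ∈ J then μ1 * q (chi K k) 1 else μ0 * q (chi K k) 0) := by
        intro k _
        by_cases h : k ∈ J <;> simp [chi, h]
      rw [Finset.prod_congr rfl this, prod_ite_split (Finset.mem_powerset.mp hJ)]
    rw [Finset.sum_congr rfl step, ← Finset.prod_add]
    have : ∀ k ∈ s, μ1 * q (chi K k) 1 + μ0 * q (chi K k) 0 = if k ∈ K then g1 else g0 := by
      intro k _
      by_cases h : k ∈ K <;> simp [chi, h, hg1def, hg0def] <;> ring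
    rw [Finset.prod_congr rfl this, prod_ite_split hK, Finset.prod_const, Finset.prod_const,
      Finset.card_sdiff_of_subset hK, hscard, hKc, hpdef]
  have hsum1 : ∑ J ∈ s.powerset, (∏ k ∈ s, if k ∈ J then μ1 else μ0) = 1 := by
    have step : ∀ J ∈ s.powerset, (∏ k ∈ s, if k ∈ J then μ1 else μ0) =
        (∏ k ∈ J, μ1) * ∏ k ∈ s \ J, μ0 :=
      fun J hJ => prod_ite_split (Finset.mem_powerset.mp hJ) _ _
    rw [Finset.sum_congr rfl step, ← Finset.prod_add]
    have : ∀ k ∈ s, μ1 + μ0 = (1:ℝ) := fun k _ => by linarith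
    rw [Finset.prod_congr rfl this, Finset.prod_const_one]
  have hR2 : ∀ K : Finset ℕ, K ⊆ s → K.card = ℓ →
      ∑ J ∈ s.powerset, (∏ k ∈ s, if k ∈ J then μ1 else μ0) *
        (1 - ∏ k ∈ s, q (chi K k) (chi J k)) = 1 - p := by
    intro K hK hKc
    have : ∀ J ∈ s.powerset, (∏ k ∈ s, if k ∈ J then μ1 else μ0) *
        (1 - ∏ k ∈ s, q (chi K k) (chi J k)) =
        (∏ k ∈ s, if k ∈ J then μ1 else μ0) -
          (∏ k ∈ s, if k ∈ J then μ1 else μ0) * (∏ k ∈ s, q (chi K k) (chi J k)) :=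
      fun J _ => by ring
    rw [Finset.sum_congr rfl this, Finset.sum_sub_distrib, hsum1, hR1 K hK hKc]
  -- KEY STEP 3: probability of attribute/connection cell
  have key3 : ∀ K : Finset ℕ, K ⊆ s → K.card = ℓ → ∀ T : Finset ℕ, T ⊆ V → T.card = d →
      P ((⋂ k ∈ s, {ω | A k u ω = chi K k}) ∩
         ⋂ v ∈ V, (if v ∈ T then {ω | U u v ω ≤ ∏ k ∈ s, q (chi K k) (A k v ω)}
           else {ω | U u v ω ≤ ∏ k ∈ s, q (chi K k) (A k v ω)}ᶜ))
      = ENNReal.ofReal (μ1 ^ ℓ * μ0 ^ (L - ℓ)) *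
          (ENNReal.ofReal p ^ d * ENNReal.ofReal (1 - p) ^ (n - 1 - d)) := by
    intro K hK hKc T hT hTc
    have hmCK : MeasurableSet (⋂ k ∈ s, {ω | A k u ω = chi K k}) :=
      MeasurableSet.biInter s.countable_toSet fun k _ => hAm k u _
    have hmConn : MeasurableSet (⋂ v ∈ V,
        (if v ∈ T then {ω | U u v ω ≤ ∏ k ∈ s, q (chi K k) (A k v ω)}
          else {ω | U u v ω ≤ ∏ k ∈ s, q (chi K k) (A k v ω)}ᶜ)) := by
      refine MeasurableSet.biInter V.countable_toSet fun v _ => ?_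
      split_ifs
      · exact hUmS K v
      · exact (hUmS K v).compl
    have hCm : ∀ J ∈ V.pi (fun _ => s.powerset),
        MeasurableSet (⋂ v ∈ V.attach, ⋂ k ∈ s, {ω | A k v.1 ω = chi (J v.1 v.2) k}) := by
      intro J _
      exact MeasurableSet.biInter V.attach.countable_toSet fun v _ =>
        MeasurableSet.biInter s.countable_toSet fun k _ => hAm k v.1 _
    have hdis : ∀ J ∈ V.pi (fun _ => s.powerset), ∀ J' ∈ V.pi (fun _ => s.powerset), J ≠ J' →
        Disjoint (⋂ v ∈ V.attach, ⋂ k ∈ s, {ω | A k v.1 ω = chi (J v.1 v.2) k})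
          (⋂ v ∈ V.attach, ⋂ k ∈ s, {ω | A k v.1 ω = chi (J' v.1 v.2) k}) := by
      intro J hJ J' hJ' hne
      rw [Set.disjoint_left]
      intro ω hω hω'
      simp only [Set.mem_iInter, Set.mem_setOf_eq] at hω hω'
      have hex : ∃ v, ∃ hv : v ∈ V, J v hv ≠ J' v hv := by
        by_contra hc
        push_neg at hc
        exact hne (by funext v hv; exact hc v hv)
      obtain ⟨v, hv, hvne⟩ := hex
      have hJs : J v hv ⊆ s := Finset.mem_powerset.mp (Finset.mem_pi.mp hJ v hv)
      have hJ's : J' v hv ⊆ s := Finset.mem_powerset.mp (Finset.mem_pi.mp hJ' v hv)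
      have hk : ∃ k, ¬ (k ∈ J v hv ↔ k ∈ J' v hv) := by
        by_contra hc
        push_neg at hc
        exact hvne (Finset.ext hc)
      obtain ⟨k, hkne⟩ := hk
      have hks : k ∈ s := by
        by_cases h3 : k ∈ J v hv
        · exact hJs h3
        · by_cases h4 : k ∈ J' v hv
          · exact hJ's h4
          · exact absurd (iff_of_false h3 h4) hkne
      have h1 := hω ⟨v, hv⟩ (Finset.mem_attach _ _) k hks
      have h2 := hω' ⟨v, hv⟩ (Finset.mem_attach _ _) k hks
      rw [h1] at h2
      apply hkne
      unfold chi at h2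
      by_cases h3 : k ∈ J v hv <;> by_cases h4 : k ∈ J' v hv <;>
        simp [h3, h4] at h2 ⊢
    have hcov : ∀ ω, ∃ J ∈ V.pi (fun _ => s.powerset),
        ω ∈ ⋂ v ∈ V.attach, ⋂ k ∈ s, {ω' | A k v.1 ω' = chi (J v.1 v.2) k} := by
      intro ω
      refine ⟨fun v _ => s.filter (fun k => A k v ω = 1),
        Finset.mem_pi.mpr fun v hv => Finset.mem_powerset.mpr (Finset.filter_subset _ _), ?_⟩
      simp only [Set.mem_iInter, Set.mem_setOf_eq]
      intro v _ k hk
      have := hA01 k v.1 ω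
      by_cases h : A k v.1 ω = 1
      · rw [h]; unfold chi
        rw [if_pos (show k ∈ s.filter (fun k' => A k' v.1 ω = 1) from
          Finset.mem_filter.mpr ⟨hk, h⟩)]
      · have h0 : A k v.1 ω = 0 := by omega
        rw [h0]; unfold chi
        rw [if_neg (show k ∉ s.filter (fun k' => A k' v.1 ω = 1) from
          fun hc => h (Finset.mem_filter.mp hc).2)]
    rw [measure_eq_sum_partition P (hmCK.inter hmConn) hCm hdis hcov]
    have hcell : ∀ J ∈ V.pi (fun _ => s.powerset),
        P ((((⋂ k ∈ s, {ω | A k u ω = chi K k}) ∩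
            ⋂ v ∈ V, (if v ∈ T then {ω | U u v ω ≤ ∏ k ∈ s, q (chi K k) (A k v ω)}
              else {ω | U u v ω ≤ ∏ k ∈ s, q (chi K k) (A k v ω)}ᶜ))) ∩
            ⋂ v ∈ V.attach, ⋂ k ∈ s, {ω | A k v.1 ω = chi (J v.1 v.2) k})
        = ENNReal.ofReal (μ1 ^ ℓ * μ0 ^ (L - ℓ)) *
            ∏ v ∈ V.attach, (ENNReal.ofReal (∏ k ∈ s, if k ∈ J v.1 v.2 then μ1 else μ0) *
              (if v.1 ∈ T then ENNReal.ofReal (∏ k ∈ s, q (chi K k) (chi (J v.1 v.2) k))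
                else ENNReal.ofReal (1 - ∏ k ∈ s, q (chi K k) (chi (J v.1 v.2) k)))) := by
      intro J hJ
      set bJ : ℕ → ℕ → ℕ := fun w k' => if h : w ∈ V then chi (J w h) k' else 0 with hbJdef
      set tJ : ℕ → ℝ := fun w =>
        if h : w ∈ V then ∏ k ∈ s, q (chi K k) (chi (J w h) k) else (1:ℝ)/2 with htJdef
      have hEq : (((⋂ k ∈ s, {ω | A k u ω = chi K k}) ∩
            ⋂ v ∈ V, (if v ∈ T then {ω | U u v ω ≤ ∏ k ∈ s, q (chi K k) (A k v ω)}
              else {ω | U u v ω ≤ ∏ k ∈ s, q (chi K k) (A k v ω)}ᶜ)) ∩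
            ⋂ v ∈ V.attach, ⋂ k ∈ s, {ω | A k v.1 ω = chi (J v.1 v.2) k})
          = ((⋂ k ∈ s, {ω | A k u ω = chi K k}) ∩
            ⋂ v ∈ V, ((⋂ k ∈ s, {ω | A k v ω = bJ v k}) ∩
              (if v ∈ T then {ω | U u v ω ≤ tJ v} else {ω | U u v ω ≤ tJ v}ᶜ))) := by
        ext ω
        simp only [Set.mem_inter_iff, Set.mem_iInter, Set.mem_setOf_eq, Finset.mem_attach,
          true_implies, Subtype.forall]
        constructor
        · rintro ⟨⟨h1, h2⟩, h3⟩
          refine ⟨h1, fun v hv => ⟨fun k hk => ?_, ?_⟩⟩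
          · rw [hbJdef]; dsimp only
            rw [dif_pos hv]
            exact h3 v hv k hk
          · have hQ : (∏ k ∈ s, q (chi K k) (A k v ω)) = tJ v := by
              rw [htJdef]; dsimp only
              rw [dif_pos hv]
              exact Finset.prod_congr rfl fun k hk => by rw [h3 v hv k hk]
            have h2' := h2 v hv
            by_cases hvT : v ∈ T
            · rw [if_pos hvT] at h2' ⊢
              exact hQ ▸ h2'
            · rw [if_neg hvT] at h2' ⊢
              exact fun hc => h2' (by rw [Set.mem_setOf_eq, hQ]; exact hc)
        · rintro ⟨h1, h2⟩
          have hattr : ∀ v (hv : v ∈ V), ∀ k ∈ s, A k v ω = chi (J v hv) k := by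
            intro v hv k hk
            have := (h2 v hv).1 k hk
            rw [hbJdef] at this; dsimp only at this
            rwa [dif_pos hv] at this
          refine ⟨⟨h1, fun v hv => ?_⟩, fun v hv k hk => hattr v hv k hk⟩
          have hQ : (∏ k ∈ s, q (chi K k) (A k v ω)) = tJ v := by
            rw [htJdef]; dsimp only
            rw [dif_pos hv]
            exact Finset.prod_congr rfl fun k hk => by rw [hattr v hv k hk]
          have h2' := (h2 v hv).2
          by_cases hvT : v ∈ T
          · rw [if_pos hvT] at h2' ⊢
            rw [Set.mem_setOf_eq, hQ]
            exact h2'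
          · rw [if_neg hvT] at h2' ⊢
            exact fun hc => h2' (by rw [Set.mem_setOf_eq, ← hQ]; exact hc)
      rw [hEq, cell_prob P A U hUsym hindep s V u huV (chi K) bJ tJ T]
      have e1 : (∏ k ∈ s, P {ω | A k u ω = chi K k})
          = ENNReal.ofReal (μ1 ^ ℓ * μ0 ^ (L - ℓ)) := by
        rw [Finset.prod_congr rfl fun k _ => hAchi K k u,
          ← ENNReal.ofReal_prod_of_nonneg (f := fun k => if k ∈ K then μ1 else μ0)
            (fun k _ => show (0:ℝ) ≤ if k ∈ K then μ1 else μ0 by split_ifs <;> linarith),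
          hprodμ K hK hKc]
      rw [e1]
      congr 1
      rw [← Finset.prod_attach V (fun v => (∏ k ∈ s, P {ω | A k v ω = bJ v k}) *
        P (if v ∈ T then {ω | U u v ω ≤ tJ v} else {ω | U u v ω ≤ tJ v}ᶜ))]
      refine Finset.prod_congr rfl fun v _ => ?_
      have hb : ∀ k, bJ v.1 k = chi (J v.1 v.2) k := fun k => by
        rw [hbJdef]; exact dif_pos v.2
      have ht : tJ v.1 = ∏ k ∈ s, q (chi K k) (chi (J v.1 v.2) k) := by
        rw [htJdef]; exact dif_pos v.2
      congr 1
      · have hstep : ∀ k ∈ s, P {ω | A k v.1 ω = bJ v.1 k}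
            = ENNReal.ofReal (if k ∈ J v.1 v.2 then μ1 else μ0) := by
          intro k hk
          rw [hb k]
          exact hAchi (J v.1 v.2) k v.1
        rw [Finset.prod_congr rfl hstep,
          ← ENNReal.ofReal_prod_of_nonneg (f := fun k => if k ∈ J v.1 v.2 then μ1 else μ0)
            (fun k _ => show (0:ℝ) ≤ if k ∈ J v.1 v.2 then μ1 else μ0 by
              split_ifs <;> linarith)]
      · by_cases hvT : v.1 ∈ T
        · rw [if_pos hvT, if_pos hvT, ht, hUprob v.1 v.2 _ (hQQm K (J v.1 v.2))]
        · rw [if_neg hvT, if_neg hvT, ht, hUprobC v.1 v.2 _ (hQQm K (J v.1 v.2))]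
    rw [Finset.sum_congr rfl hcell, ← Finset.mul_sum]
    have hps := (Finset.prod_sum (s := V) (t := fun _ => s.powerset)
      (f := fun v Jv => ENNReal.ofReal (∏ k ∈ s, if k ∈ Jv then μ1 else μ0) *
        (if v ∈ T then ENNReal.ofReal (∏ k ∈ s, q (chi K k) (chi Jv k))
          else ENNReal.ofReal (1 - ∏ k ∈ s, q (chi K k) (chi Jv k))))).symm
    rw [hps]
    have hv1 : ∀ v ∈ V, (∑ Jv ∈ s.powerset,
        ENNReal.ofReal (∏ k ∈ s, if k ∈ Jv then μ1 else μ0) *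
          (if v ∈ T then ENNReal.ofReal (∏ k ∈ s, q (chi K k) (chi Jv k))
            else ENNReal.ofReal (1 - ∏ k ∈ s, q (chi K k) (chi Jv k))))
        = if v ∈ T then ENNReal.ofReal p else ENNReal.ofReal (1 - p) := by
      intro v hv
      by_cases hvT : v ∈ T
      · simp only [if_pos hvT]
        rw [Finset.sum_congr rfl (fun Jv _ => (ENNReal.ofReal_mul (hxnn Jv)).symm),
          ← ENNReal.ofReal_sum_of_nonneg
            (fun Jv _ => mul_nonneg (hxnn Jv) (hQQm K Jv).1.le),
          hR1 K hK hKc]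
      · simp only [if_neg hvT]
        rw [Finset.sum_congr rfl (fun Jv _ => (ENNReal.ofReal_mul (hxnn Jv)).symm),
          ← ENNReal.ofReal_sum_of_nonneg
            (fun Jv _ => mul_nonneg (hxnn Jv) (sub_nonneg.mpr (hQQm K Jv).2.le)),
          hR2 K hK hKc]
    rw [Finset.prod_congr rfl hv1, prod_ite_split hT, Finset.prod_const, Finset.prod_const,
      Finset.card_sdiff_of_subset hT, hVcard, hTc]
  -- measurability of degree-count sets
  have hmDeg : ∀ K : Finset ℕ, MeasurableSet
      {ω | (∑ v ∈ V, if U u v ω ≤ ∏ k ∈ s, q (chi K k) (A k v ω) then (1:ℕ) else 0) = d} := by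
    intro K
    have hmes : Measurable fun ω =>
        ∑ v ∈ V, if U u v ω ≤ ∏ k ∈ s, q (chi K k) (A k v ω) then (1:ℕ) else 0 :=
      Finset.measurable_sum V fun v _ =>
        Measurable.ite (hUmS K v) measurable_const measurable_const
    exact hmes (measurableSet_singleton d)
  -- KEY STEP 2: sum over connection patterns
  have key2 : ∀ K : Finset ℕ, K ⊆ s → K.card = ℓ →
      P ((⋂ k ∈ s, {ω | A k u ω = chi K k}) ∩
        {ω | (∑ v ∈ V, if U u v ω ≤ ∏ k ∈ s, q (chi K k) (A k v ω) then (1:ℕ) else 0) = d})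
      = ((n - 1).choose d : ℝ≥0∞) * (ENNReal.ofReal (μ1 ^ ℓ * μ0 ^ (L - ℓ)) *
          (ENNReal.ofReal p ^ d * ENNReal.ofReal (1 - p) ^ (n - 1 - d))) := by
    intro K hK hKc
    have hmCK : MeasurableSet (⋂ k ∈ s, {ω | A k u ω = chi K k}) :=
      MeasurableSet.biInter s.countable_toSet fun k _ => hAm k u _
    have hCm : ∀ T ∈ V.powerset, MeasurableSet (⋂ v ∈ V,
        (if v ∈ T then {ω | U u v ω ≤ ∏ k ∈ s, q (chi K k) (A k v ω)}
          else {ω | U u v ω ≤ ∏ k ∈ s, q (chi K k) (A k v ω)}ᶜ)) := by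
      intro T _
      refine MeasurableSet.biInter V.countable_toSet fun v _ => ?_
      split_ifs
      · exact hUmS K v
      · exact (hUmS K v).compl
    have hdis : ∀ T ∈ V.powerset, ∀ T' ∈ V.powerset, T ≠ T' →
        Disjoint (⋂ v ∈ V, (if v ∈ T then {ω | U u v ω ≤ ∏ k ∈ s, q (chi K k) (A k v ω)}
            else {ω | U u v ω ≤ ∏ k ∈ s, q (chi K k) (A k v ω)}ᶜ))
          (⋂ v ∈ V, (if v ∈ T' then {ω | U u v ω ≤ ∏ k ∈ s, q (chi K k) (A k v ω)}
            else {ω | U u v ω ≤ ∏ k ∈ s, q (chi K k) (A k v ω)}ᶜ)) := by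
      intro T hT T' hT' hne
      rw [Set.disjoint_left]
      intro ω hω hω'
      simp only [Set.mem_iInter] at hω hω'
      have hex : ∃ v ∈ V, ¬ (v ∈ T ↔ v ∈ T') := by
        by_contra hc
        push_neg at hc
        apply hne
        ext v
        constructor
        · intro hvT; exact (hc v (Finset.mem_powerset.mp hT hvT)).mp hvT
        · intro hvT'; exact (hc v (Finset.mem_powerset.mp hT' hvT')).mpr hvT'
      obtain ⟨v, hv, hvne⟩ := hex
      have h1 := hω v hv
      have h2 := hω' v hv
      apply hvne
      by_cases h3 : v ∈ T <;> by_cases h4 : v ∈ T' <;>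
        simp only [h3, h4, if_true, if_false, Set.mem_compl_iff, Set.mem_setOf_eq,
          iff_true, iff_false] at h1 h2 ⊢
      · exact absurd h1 h2
      · exact absurd h2 h1
    have hcov : ∀ ω, ∃ T ∈ V.powerset,
        ω ∈ ⋂ v ∈ V, (if v ∈ T then {ω' | U u v ω' ≤ ∏ k ∈ s, q (chi K k) (A k v ω')}
          else {ω' | U u v ω' ≤ ∏ k ∈ s, q (chi K k) (A k v ω')}ᶜ) := by
      intro ω
      refine ⟨V.filter (fun v => U u v ω ≤ ∏ k ∈ s, q (chi K k) (A k v ω)),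
        Finset.mem_powerset.mpr (Finset.filter_subset _ _), ?_⟩
      simp only [Set.mem_iInter]
      intro v hv
      by_cases h : U u v ω ≤ ∏ k ∈ s, q (chi K k) (A k v ω)
      · rw [if_pos (show v ∈ V.filter
            (fun v' => U u v' ω ≤ ∏ k ∈ s, q (chi K k) (A k v' ω)) from
          Finset.mem_filter.mpr ⟨hv, h⟩)]
        exact h
      · rw [if_neg (show v ∉ V.filter
            (fun v' => U u v' ω ≤ ∏ k ∈ s, q (chi K k) (A k v' ω)) from
          fun hc => h (Finset.mem_filter.mp hc).2)]
        exact h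
    rw [measure_eq_sum_partition P (hmCK.inter (hmDeg K)) hCm hdis hcov]
    have hterm : ∀ T ∈ V.powerset,
        P (((⋂ k ∈ s, {ω | A k u ω = chi K k}) ∩
            {ω | (∑ v ∈ V, if U u v ω ≤ ∏ k ∈ s, q (chi K k) (A k v ω) then (1:ℕ) else 0) = d}) ∩
          ⋂ v ∈ V, (if v ∈ T then {ω | U u v ω ≤ ∏ k ∈ s, q (chi K k) (A k v ω)}
            else {ω | U u v ω ≤ ∏ k ∈ s, q (chi K k) (A k v ω)}ᶜ))
        = if T.card = d then (ENNReal.ofReal (μ1 ^ ℓ * μ0 ^ (L - ℓ)) *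
            (ENNReal.ofReal p ^ d * ENNReal.ofReal (1 - p) ^ (n - 1 - d))) else 0 := by
      intro T hT
      have hsum : ∀ ω, (ω ∈ ⋂ v ∈ V,
          (if v ∈ T then {ω' | U u v ω' ≤ ∏ k ∈ s, q (chi K k) (A k v ω')}
            else {ω' | U u v ω' ≤ ∏ k ∈ s, q (chi K k) (A k v ω')}ᶜ)) →
          (∑ v ∈ V, if U u v ω ≤ ∏ k ∈ s, q (chi K k) (A k v ω) then (1:ℕ) else 0) = T.card := by
        intro ω hω
        simp only [Set.mem_iInter] at hω
        have hterm2 : ∀ v ∈ V, (if U u v ω ≤ ∏ k ∈ s, q (chi K k) (A k v ω) then (1:ℕ) else 0)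
            = if v ∈ T then 1 else 0 := by
          intro v hv
          have h1 := hω v hv
          by_cases h3 : v ∈ T
          · rw [if_pos h3] at h1 ⊢
            have h1' : U u v ω ≤ ∏ k ∈ s, q (chi K k) (A k v ω) := h1
            rw [if_pos h1']
          · rw [if_neg h3] at h1 ⊢
            have h1' : ¬ U u v ω ≤ ∏ k ∈ s, q (chi K k) (A k v ω) := h1
            rw [if_neg h1']
        rw [Finset.sum_congr rfl hterm2, Finset.sum_ite_mem,
          Finset.inter_eq_right.mpr (Finset.mem_powerset.mp hT), Finset.sum_const,
          smul_eq_mul, mul_one]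
      by_cases hTd : T.card = d
      · rw [if_pos hTd, ← key3 K hK hKc T (Finset.mem_powerset.mp hT) hTd]
        congr 1
        ext ω
        simp only [Set.mem_inter_iff, Set.mem_setOf_eq]
        constructor
        · rintro ⟨⟨ha, _⟩, hc⟩
          exact ⟨ha, hc⟩
        · rintro ⟨ha, hc⟩
          exact ⟨⟨ha, by rw [hsum ω hc, hTd]⟩, hc⟩
      · rw [if_neg hTd]
        have hempty : (((⋂ k ∈ s, {ω | A k u ω = chi K k}) ∩
            {ω | (∑ v ∈ V, if U u v ω ≤ ∏ k ∈ s, q (chi K k) (A k v ω) then (1:ℕ) else 0) = d}) ∩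
          ⋂ v ∈ V, (if v ∈ T then {ω | U u v ω ≤ ∏ k ∈ s, q (chi K k) (A k v ω)}
            else {ω | U u v ω ≤ ∏ k ∈ s, q (chi K k) (A k v ω)}ᶜ)) = ∅ := by
          rw [Set.eq_empty_iff_forall_notMem]
          rintro ω ⟨⟨_, hb⟩, hc⟩
          exact hTd ((hsum ω hc).symm.trans hb)
        rw [hempty, measure_empty]
    rw [Finset.sum_congr rfl hterm, ← Finset.sum_filter, Finset.sum_const,
      ← Finset.powersetCard_eq_filter, Finset.card_powersetCard, hVcard, nsmul_eq_mul]
  -- measurability of the main event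
  have hmEv : MeasurableSet {ω |
      (∑ v ∈ V, if U u v ω ≤ ∏ k ∈ s, q (A k u ω) (A k v ω) then (1:ℕ) else 0) = d ∧
      (∑ k ∈ s, A k u ω) = ℓ} := by
    have m1 : Measurable fun ω =>
        ∑ v ∈ V, if U u v ω ≤ ∏ k ∈ s, q (A k u ω) (A k v ω) then (1:ℕ) else 0 :=
      Finset.measurable_sum V fun v _ =>
        Measurable.ite (measurableSet_le (hUmeas u v) (hqAA v)) measurable_const measurable_const
    have m2 : Measurable fun ω => ∑ k ∈ s, A k u ω :=
      Finset.measurable_sum s fun k _ => hAmeas k u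
    exact (m1 (measurableSet_singleton d)).inter (m2 (measurableSet_singleton ℓ))
  -- KEY STEP 1: conditioning on u's attributes
  have key1 : ∀ K ∈ s.powerset,
      P ({ω | (∑ v ∈ V, if U u v ω ≤ ∏ k ∈ s, q (A k u ω) (A k v ω) then (1:ℕ) else 0) = d ∧
          (∑ k ∈ s, A k u ω) = ℓ} ∩ ⋂ k ∈ s, {ω | A k u ω = chi K k})
      = if K.card = ℓ then ((n - 1).choose d : ℝ≥0∞) *
          (ENNReal.ofReal (μ1 ^ ℓ * μ0 ^ (L - ℓ)) *
            (ENNReal.ofReal p ^ d * ENNReal.ofReal (1 - p) ^ (n - 1 - d))) else 0 := by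
    intro K hK
    have hKs := Finset.mem_powerset.mp hK
    have hsums : ∀ ω, (∀ k ∈ s, A k u ω = chi K k) →
        (∑ v ∈ V, if U u v ω ≤ ∏ k ∈ s, q (A k u ω) (A k v ω) then (1:ℕ) else 0)
        = ∑ v ∈ V, if U u v ω ≤ ∏ k ∈ s, q (chi K k) (A k v ω) then (1:ℕ) else 0 := by
      intro ω h3
      refine Finset.sum_congr rfl fun v _ => ?_
      have hpq : (∏ k ∈ s, q (A k u ω) (A k v ω)) = ∏ k ∈ s, q (chi K k) (A k v ω) :=
        Finset.prod_congr rfl fun k hk => by rw [h3 k hk]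
      rw [hpq]
    have hsumA : ∀ ω, (∀ k ∈ s, A k u ω = chi K k) → (∑ k ∈ s, A k u ω) = K.card := by
      intro ω h3
      rw [Finset.sum_congr rfl h3, hsumchi K hKs]
    by_cases hKc : K.card = ℓ
    · rw [if_pos hKc, ← key2 K hKs hKc]
      congr 1
      ext ω
      simp only [Set.mem_inter_iff, Set.mem_setOf_eq, Set.mem_iInter]
      constructor
      · rintro ⟨⟨h1, _⟩, h3⟩
        exact ⟨h3, by rw [← hsums ω h3]; exact h1⟩
      · rintro ⟨h3, h2⟩
        exact ⟨⟨by rw [hsums ω h3]; exact h2, by rw [hsumA ω h3, hKc]⟩, h3⟩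
    · rw [if_neg hKc]
      have hempty : ({ω | (∑ v ∈ V,
            if U u v ω ≤ ∏ k ∈ s, q (A k u ω) (A k v ω) then (1:ℕ) else 0) = d ∧
          (∑ k ∈ s, A k u ω) = ℓ} ∩ ⋂ k ∈ s, {ω | A k u ω = chi K k}) = ∅ := by
        rw [Set.eq_empty_iff_forall_notMem]
        rintro ω ⟨⟨_, h2⟩, h3⟩
        simp only [Set.mem_iInter, Set.mem_setOf_eq] at h3
        exact hKc ((hsumA ω h3).symm.trans h2)
      rw [hempty, measure_empty]
  -- partition of the whole space by u's attribute configuration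
  have hmCK' : ∀ K ∈ s.powerset, MeasurableSet (⋂ k ∈ s, {ω | A k u ω = chi K k}) :=
    fun K _ => MeasurableSet.biInter s.countable_toSet fun k _ => hAm k u _
  have hdisCK : ∀ K ∈ s.powerset, ∀ K' ∈ s.powerset, K ≠ K' →
      Disjoint (⋂ k ∈ s, {ω | A k u ω = chi K k}) (⋂ k ∈ s, {ω | A k u ω = chi K' k}) := by
    intro K hK K' hK' hne
    rw [Set.disjoint_left]
    intro ω hω hω'
    simp only [Set.mem_iInter, Set.mem_setOf_eq] at hω hω'
    have hk : ∃ k, ¬ (k ∈ K ↔ k ∈ K') := by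
      by_contra hc
      push_neg at hc
      exact hne (Finset.ext hc)
    obtain ⟨k, hkne⟩ := hk
    have hks : k ∈ s := by
      by_cases h3 : k ∈ K
      · exact Finset.mem_powerset.mp hK h3
      · by_cases h4 : k ∈ K'
        · exact Finset.mem_powerset.mp hK' h4
        · exact absurd (iff_of_false h3 h4) hkne
    have h1 := hω k hks
    have h2 := hω' k hks
    rw [h1] at h2
    apply hkne
    unfold chi at h2
    by_cases h3 : k ∈ K <;> by_cases h4 : k ∈ K' <;> simp [h3, h4] at h2 ⊢
  have hcovCK : ∀ ω, ∃ K ∈ s.powerset, ω ∈ ⋂ k ∈ s, {ω' | A k u ω' = chi K k} := by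
    intro ω
    refine ⟨s.filter (fun k => A k u ω = 1),
      Finset.mem_powerset.mpr (Finset.filter_subset _ _), ?_⟩
    simp only [Set.mem_iInter, Set.mem_setOf_eq]
    intro k hk
    have := hA01 k u ω
    by_cases h : A k u ω = 1
    · rw [h]; unfold chi
      rw [if_pos (show k ∈ s.filter (fun k' => A k' u ω = 1) from
        Finset.mem_filter.mpr ⟨hk, h⟩)]
    · have h0 : A k u ω = 0 := by omega
      rw [h0]; unfold chi
      rw [if_neg (show k ∉ s.filter (fun k' => A k' u ω = 1) from
        fun hc => h (Finset.mem_filter.mp hc).2)]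
  rw [measure_eq_sum_partition P hmEv hmCK' hdisCK hcovCK, Finset.sum_congr rfl key1,
    ← Finset.sum_filter, Finset.sum_const, ← Finset.powersetCard_eq_filter,
    Finset.card_powersetCard, hscard, nsmul_eq_mul]
  -- final real-number bookkeeping
  have nn0 : (0:ℝ) ≤ μ1 ^ ℓ * μ0 ^ (L - ℓ) := by positivity
  have nnp : (0:ℝ) ≤ p := hppos.le
  have nn1p : (0:ℝ) ≤ 1 - p := by linarith
  rw [show ((L.choose ℓ : ℝ) * μ1 ^ ℓ * μ0 ^ (L - ℓ) * ((n - 1).choose d : ℝ) * p ^ d *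
      (1 - p) ^ (n - 1 - d)) = (L.choose ℓ : ℝ) * (((n - 1).choose d : ℝ) *
        ((μ1 ^ ℓ * μ0 ^ (L - ℓ)) * (p ^ d * (1 - p) ^ (n - 1 - d)))) from by ring]
  rw [ENNReal.ofReal_mul (Nat.cast_nonneg _), ENNReal.ofReal_mul (Nat.cast_nonneg _),
    ENNReal.ofReal_mul nn0, ENNReal.ofReal_mul (pow_nonneg nnp _),
    ENNReal.ofReal_pow nnp, ENNReal.ofReal_pow nn1p, ENNReal.ofReal_natCast,
    ENNReal.ofReal_natCast]
end
end

section
/- Let ρ > 0 and let n ↦ L_n be a ρ-admissible scaling. For each n ≥ 2 let (D_n, S_n) be a compound-binomial degree pair with parameters (n, L_n). Then the zero-one law holds: lim_{n→∞} P(D_n = 0) = 1 if 1 + ρ·ln(Γ(1)^{μ(1)} Γ(0)^{μ(0)}) < 0, and lim_{n→∞} P(D_n = 0) = 0 if 1 + ρ·ln(Γ(1)^{μ(1)} Γ(0)^{μ(0)}) > 0. -/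
open MeasureTheory ProbabilityTheory Filter Real
open scoped ENNReal NNReal

noncomputable section

/-- A compound-binomial degree pair `(D, S)` with parameters `(n, L)`:
`S` is Binomial(L, μ1) and, conditionally on `S = ℓ`, `D` is
Binomial(n-1, Γ1^ℓ Γ0^(L-ℓ)); equivalently the joint pmf is as below. -/
def IsCompoundBinomialPair {Ω : Type*} [MeasurableSpace Ω] (P : Measure Ω)
    (μ1 μ0 Γ1 Γ0 : ℝ) (n L : ℕ) (D S : Ω → ℕ) : Prop :=
  Measurable D ∧ Measurable S ∧
    ∀ d ≤ n - 1, ∀ ℓ ≤ L,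
      P {ω | D ω = d ∧ S ω = ℓ} =
        ENNReal.ofReal ((L.choose ℓ : ℝ) * μ1 ^ ℓ * μ0 ^ (L - ℓ) *
          ((n - 1).choose d : ℝ) * (Γ1 ^ ℓ * Γ0 ^ (L - ℓ)) ^ d *
          (1 - Γ1 ^ ℓ * Γ0 ^ (L - ℓ)) ^ (n - 1 - d))

/-- A scaling `n ↦ L n` is `ρ`-admissible if `L n ~ ρ ln n` as `n → ∞`. -/
def IsAdmissible (ρ : ℝ) (L : ℕ → ℕ) : Prop :=
  (∀ n, 0 < L n) ∧
    Tendsto (fun n => (L n : ℝ) / (ρ * Real.log n)) atTop (nhds 1)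

/-- `Ψ(x) = (x+1) ln(x+1) - x`. -/
def Psi (x : ℝ) : ℝ := (x + 1) * Real.log (x + 1) - x

/-- The standard Gaussian distribution function. -/
def Phi (z : ℝ) : ℝ := ∫ t in Set.Iic z, Real.exp (-t ^ 2 / 2) / Real.sqrt (2 * Real.pi)

lemma binom_sum (x y : ℝ) (m : ℕ) :
    ∑ k ∈ Finset.range (m+1), (m.choose k : ℝ) * x ^ k * y ^ (m-k) = (x+y)^m := by
  rw [add_pow]
  exact Finset.sum_congr rfl (fun k _ => by ring)

lemma pow_eq_exp' (x : ℝ) (hx : 0 < x) (K : ℕ) : x ^ K = Real.exp (Real.log x * K) := by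
  rw [mul_comm, Real.exp_nat_mul, Real.exp_log hx]

lemma chernoff_upper (μ1 μ0 : ℝ) (h1 : 0 < μ1) (h0 : 0 < μ0) (t s : ℝ) (hs : 0 < s) (K : ℕ) :
    ∑ ℓ ∈ (Finset.range (K+1)).filter (fun (ℓ : ℕ) => t * K < (ℓ:ℝ)),
      (K.choose ℓ : ℝ) * μ1 ^ ℓ * μ0 ^ (K-ℓ)
    ≤ Real.exp ((Real.log (μ1 * Real.exp s + μ0) - s * t) * K) := by
  have hB : 0 < μ1 * Real.exp s + μ0 := by positivity
  have key : ∑ ℓ ∈ Finset.range (K+1),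
      (K.choose ℓ : ℝ) * μ1 ^ ℓ * μ0 ^ (K-ℓ) * Real.exp (s * ℓ)
      = Real.exp (Real.log (μ1 * Real.exp s + μ0) * K) := by
    have h : ∀ ℓ ∈ Finset.range (K+1),
        (K.choose ℓ : ℝ) * μ1 ^ ℓ * μ0 ^ (K-ℓ) * Real.exp (s * ℓ)
        = (K.choose ℓ : ℝ) * (μ1 * Real.exp s) ^ ℓ * μ0 ^ (K-ℓ) := by
      intro ℓ _
      rw [mul_comm s (ℓ:ℝ), Real.exp_nat_mul, mul_pow]
      ring
    rw [Finset.sum_congr rfl h, binom_sum, pow_eq_exp' _ hB]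
  calc ∑ ℓ ∈ (Finset.range (K+1)).filter (fun (ℓ : ℕ) => t * K < (ℓ:ℝ)),
        (K.choose ℓ : ℝ) * μ1 ^ ℓ * μ0 ^ (K-ℓ)
      ≤ ∑ ℓ ∈ (Finset.range (K+1)).filter (fun (ℓ : ℕ) => t * K < (ℓ:ℝ)),
        (K.choose ℓ : ℝ) * μ1 ^ ℓ * μ0 ^ (K-ℓ) * (Real.exp (s * ℓ) * Real.exp (-(s * t * K))) := by
        apply Finset.sum_le_sum
        intro ℓ hℓ
        rw [Finset.mem_filter] at hℓ
        have h2 : (1:ℝ) ≤ Real.exp (s * ℓ) * Real.exp (-(s * t * K)) := by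
          rw [← Real.exp_add, ← Real.exp_zero]
          apply Real.exp_le_exp.2
          nlinarith [hℓ.2]
        nlinarith [mul_nonneg (mul_nonneg (Nat.cast_nonneg (K.choose ℓ)) (le_of_lt (pow_pos h1 ℓ))) (le_of_lt (pow_pos h0 (K-ℓ)))]
    _ ≤ ∑ ℓ ∈ Finset.range (K+1),
        (K.choose ℓ : ℝ) * μ1 ^ ℓ * μ0 ^ (K-ℓ) * (Real.exp (s * ℓ) * Real.exp (-(s * t * K))) := by
        apply Finset.sum_le_sum_of_subset_of_nonneg (Finset.filter_subset _ _)
        intro ℓ _ _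
        positivity
    _ = (∑ ℓ ∈ Finset.range (K+1),
        (K.choose ℓ : ℝ) * μ1 ^ ℓ * μ0 ^ (K-ℓ) * Real.exp (s * ℓ)) * Real.exp (-(s * t * K)) := by
        rw [Finset.sum_mul]
        exact Finset.sum_congr rfl (fun ℓ _ => by ring)
    _ = Real.exp ((Real.log (μ1 * Real.exp s + μ0) - s * t) * K) := by
        rw [key, ← Real.exp_add]; ring_nf

lemma chernoff_lower (μ1 μ0 : ℝ) (h1 : 0 < μ1) (h0 : 0 < μ0) (t s : ℝ) (hs : 0 < s) (K : ℕ) :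
    ∑ ℓ ∈ (Finset.range (K+1)).filter (fun (ℓ : ℕ) => (ℓ:ℝ) < t * K),
      (K.choose ℓ : ℝ) * μ1 ^ ℓ * μ0 ^ (K-ℓ)
    ≤ Real.exp ((Real.log (μ1 * Real.exp (-s) + μ0) + s * t) * K) := by
  have hB : 0 < μ1 * Real.exp (-s) + μ0 := by positivity
  have key : ∑ ℓ ∈ Finset.range (K+1),
      (K.choose ℓ : ℝ) * μ1 ^ ℓ * μ0 ^ (K-ℓ) * Real.exp (-s * ℓ)
      = Real.exp (Real.log (μ1 * Real.exp (-s) + μ0) * K) := by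
    have h : ∀ ℓ ∈ Finset.range (K+1),
        (K.choose ℓ : ℝ) * μ1 ^ ℓ * μ0 ^ (K-ℓ) * Real.exp (-s * ℓ)
        = (K.choose ℓ : ℝ) * (μ1 * Real.exp (-s)) ^ ℓ * μ0 ^ (K-ℓ) := by
      intro ℓ _
      rw [mul_comm (-s) (ℓ:ℝ), Real.exp_nat_mul, mul_pow]
      ring
    rw [Finset.sum_congr rfl h, binom_sum, pow_eq_exp' _ hB]
  calc ∑ ℓ ∈ (Finset.range (K+1)).filter (fun (ℓ : ℕ) => (ℓ:ℝ) < t * K),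
        (K.choose ℓ : ℝ) * μ1 ^ ℓ * μ0 ^ (K-ℓ)
      ≤ ∑ ℓ ∈ (Finset.range (K+1)).filter (fun (ℓ : ℕ) => (ℓ:ℝ) < t * K),
        (K.choose ℓ : ℝ) * μ1 ^ ℓ * μ0 ^ (K-ℓ) * (Real.exp (-s * ℓ) * Real.exp (s * t * K)) := by
        apply Finset.sum_le_sum
        intro ℓ hℓ
        rw [Finset.mem_filter] at hℓ
        have h2 : (1:ℝ) ≤ Real.exp (-s * ℓ) * Real.exp (s * t * K) := by
          rw [← Real.exp_add, ← Real.exp_zero]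
          apply Real.exp_le_exp.2
          nlinarith [hℓ.2]
        nlinarith [mul_nonneg (mul_nonneg (Nat.cast_nonneg (K.choose ℓ)) (le_of_lt (pow_pos h1 ℓ))) (le_of_lt (pow_pos h0 (K-ℓ)))]
    _ ≤ ∑ ℓ ∈ Finset.range (K+1),
        (K.choose ℓ : ℝ) * μ1 ^ ℓ * μ0 ^ (K-ℓ) * (Real.exp (-s * ℓ) * Real.exp (s * t * K)) := by
        apply Finset.sum_le_sum_of_subset_of_nonneg (Finset.filter_subset _ _)
        intro ℓ _ _
        positivity
    _ = (∑ ℓ ∈ Finset.range (K+1),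
        (K.choose ℓ : ℝ) * μ1 ^ ℓ * μ0 ^ (K-ℓ) * Real.exp (-s * ℓ)) * Real.exp (s * t * K) := by
        rw [Finset.sum_mul]
        exact Finset.sum_congr rfl (fun ℓ _ => by ring)
    _ = Real.exp ((Real.log (μ1 * Real.exp (-s) + μ0) + s * t) * K) := by
        rw [key, ← Real.exp_add]; ring_nf

lemma q_bounds (Γ1 Γ0 μ1 : ℝ) (hΓ1 : 0 < Γ1) (hΓ0 : 0 < Γ0) (ε : ℝ) (hε : 0 ≤ ε)
    (K ℓ : ℕ) (hℓK : ℓ ≤ K) (hlo : (μ1 - ε) * K ≤ (ℓ:ℝ)) (hhi : (ℓ:ℝ) ≤ (μ1 + ε) * K) :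
    Γ1 ^ ℓ * Γ0 ^ (K-ℓ)
      ≤ Real.exp ((μ1 * Real.log Γ1 + (1-μ1) * Real.log Γ0
          + ε * (|Real.log Γ1 - Real.log Γ0| + 1)) * K)
    ∧ Real.exp ((μ1 * Real.log Γ1 + (1-μ1) * Real.log Γ0
          - ε * (|Real.log Γ1 - Real.log Γ0| + 1)) * K)
      ≤ Γ1 ^ ℓ * Γ0 ^ (K-ℓ) := by
  set a := Real.log Γ1
  set b := Real.log Γ0
  have hq : Γ1 ^ ℓ * Γ0 ^ (K-ℓ) = Real.exp (a * ℓ + b * ((K:ℝ) - ℓ)) := by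
    rw [Real.exp_add, mul_comm a (ℓ:ℝ), mul_comm b _, ← Nat.cast_sub hℓK,
      Real.exp_nat_mul, Real.exp_nat_mul, Real.exp_log hΓ1, Real.exp_log hΓ0]
  have hK0 : (0:ℝ) ≤ K := Nat.cast_nonneg K
  have habs : |(a - b) * ((ℓ:ℝ) - μ1 * K)| ≤ (|a - b| + 1) * (ε * K) := by
    rw [abs_mul]
    have h1 : |(ℓ:ℝ) - μ1 * K| ≤ ε * K := abs_le.2 ⟨by linarith, by linarith⟩
    have h2 : (0:ℝ) ≤ |a - b| := abs_nonneg _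
    nlinarith [abs_nonneg ((ℓ:ℝ) - μ1 * K)]
  have habs' := abs_le.1 habs
  constructor
  · rw [hq]
    apply Real.exp_le_exp.2
    nlinarith [habs'.2]
  · rw [hq]
    apply Real.exp_le_exp.2
    nlinarith [habs'.1]

lemma tail_le (μ1 μ0 : ℝ) (h1 : μ1 ∈ Set.Ioo (0:ℝ) 1) (h0 : μ0 ∈ Set.Ioo (0:ℝ) 1)
    (hsum : μ0 + μ1 = 1) (ε : ℝ) (hε : 0 < ε) :
    ∃ κ > 0, ∀ K : ℕ,
      ∑ ℓ ∈ (Finset.range (K+1)).filter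
          (fun (ℓ : ℕ) => (ℓ:ℝ) < (μ1 - ε) * K ∨ (μ1 + ε) * K < (ℓ:ℝ)),
        (K.choose ℓ : ℝ) * μ1 ^ ℓ * μ0 ^ (K-ℓ)
      ≤ 2 * Real.exp (-(κ * K)) := by
  obtain ⟨h1a, h1b⟩ := h1
  obtain ⟨h0a, h0b⟩ := h0
  set s : ℝ := min (1/2) (ε/4) with hs_def
  have hs : 0 < s := lt_min (by norm_num) (by linarith)
  have hs2 : s ≤ 1/2 := min_le_left _ _
  have hs4 : s ≤ ε/4 := min_le_right _ _
  refine ⟨s * ε / 2, by positivity, fun K => ?_⟩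
  -- exponent bounds
  have hE := Real.add_one_le_exp s
  have hEneg := Real.add_one_le_exp (-s)
  have hEexp : Real.exp (-s) * Real.exp s = 1 := by
    rw [← Real.exp_add]; simp
  have hEpos := Real.exp_pos s
  have hEnegpos := Real.exp_pos (-s)
  have hexp_up : Real.exp s - 1 - s ≤ 2 * s^2 := by nlinarith
  have hexp_lo : Real.exp (-s) - 1 + s ≤ s^2 := by nlinarith
  have hBup : 0 < μ1 * Real.exp s + μ0 := by positivity
  have hBlo : 0 < μ1 * Real.exp (-s) + μ0 := by positivity
  have hlogup : Real.log (μ1 * Real.exp s + μ0) ≤ μ1 * (Real.exp s - 1) := by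
    have := Real.log_le_sub_one_of_pos hBup
    linarith
  have hloglo : Real.log (μ1 * Real.exp (-s) + μ0) ≤ μ1 * (Real.exp (-s) - 1) := by
    have := Real.log_le_sub_one_of_pos hBlo
    linarith
  have hup : Real.log (μ1 * Real.exp s + μ0) - s * (μ1 + ε) ≤ -(s * ε / 2) := by nlinarith
  have hlo : Real.log (μ1 * Real.exp (-s) + μ0) + s * (μ1 - ε) ≤ -(s * ε / 2) := by nlinarith
  -- split the sum
  have hsplit : (Finset.range (K+1)).filter
      (fun (ℓ : ℕ) => (ℓ:ℝ) < (μ1 - ε) * K ∨ (μ1 + ε) * K < (ℓ:ℝ))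
      = (Finset.range (K+1)).filter (fun (ℓ : ℕ) => (ℓ:ℝ) < (μ1 - ε) * K)
        ∪ (Finset.range (K+1)).filter (fun (ℓ : ℕ) => (μ1 + ε) * K < (ℓ:ℝ)) :=
    Finset.filter_or _ _ _
  have hnonneg : ∀ ℓ : ℕ, 0 ≤ (K.choose ℓ : ℝ) * μ1 ^ ℓ * μ0 ^ (K-ℓ) := by
    intro ℓ; positivity
  have hsum_le : ∑ ℓ ∈ (Finset.range (K+1)).filter
      (fun (ℓ : ℕ) => (ℓ:ℝ) < (μ1 - ε) * K ∨ (μ1 + ε) * K < (ℓ:ℝ)),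
        (K.choose ℓ : ℝ) * μ1 ^ ℓ * μ0 ^ (K-ℓ)
      ≤ ∑ ℓ ∈ (Finset.range (K+1)).filter (fun (ℓ : ℕ) => (ℓ:ℝ) < (μ1 - ε) * K),
          (K.choose ℓ : ℝ) * μ1 ^ ℓ * μ0 ^ (K-ℓ)
        + ∑ ℓ ∈ (Finset.range (K+1)).filter (fun (ℓ : ℕ) => (μ1 + ε) * K < (ℓ:ℝ)),
          (K.choose ℓ : ℝ) * μ1 ^ ℓ * μ0 ^ (K-ℓ) := by
    rw [hsplit]
    have := Finset.sum_union_inter (s₁ := (Finset.range (K+1)).filter (fun (ℓ : ℕ) => (ℓ:ℝ) < (μ1 - ε) * K))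
      (s₂ := (Finset.range (K+1)).filter (fun (ℓ : ℕ) => (μ1 + ε) * K < (ℓ:ℝ)))
      (f := fun ℓ => (K.choose ℓ : ℝ) * μ1 ^ ℓ * μ0 ^ (K-ℓ))
    have hint : 0 ≤ ∑ ℓ ∈ ((Finset.range (K+1)).filter (fun (ℓ : ℕ) => (ℓ:ℝ) < (μ1 - ε) * K))
        ∩ ((Finset.range (K+1)).filter (fun (ℓ : ℕ) => (μ1 + ε) * K < (ℓ:ℝ))),
        (K.choose ℓ : ℝ) * μ1 ^ ℓ * μ0 ^ (K-ℓ) :=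
      Finset.sum_nonneg (fun ℓ _ => hnonneg ℓ)
    linarith
  have hK0 : (0:ℝ) ≤ K := Nat.cast_nonneg K
  have e1 : Real.exp ((Real.log (μ1 * Real.exp (-s) + μ0) + s * (μ1 - ε)) * K)
      ≤ Real.exp (-(s * ε / 2 * K)) := by
    apply Real.exp_le_exp.2
    nlinarith
  have e2 : Real.exp ((Real.log (μ1 * Real.exp s + μ0) - s * (μ1 + ε)) * K)
      ≤ Real.exp (-(s * ε / 2 * K)) := by
    apply Real.exp_le_exp.2
    nlinarith
  have := chernoff_lower μ1 μ0 h1a h0a (μ1 - ε) s hs K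
  have := chernoff_upper μ1 μ0 h1a h0a (μ1 + ε) s hs K
  linarith

lemma prob_D_eq_zero {Ω : Type*} [MeasurableSpace Ω] (P : Measure Ω) [IsProbabilityMeasure P]
    (μ1 μ0 Γ1 Γ0 : ℝ) (hμ1 : 0 ≤ μ1) (hμ0 : 0 ≤ μ0) (hμ : μ0 + μ1 = 1)
    (hΓ1 : Γ1 ∈ Set.Ioo (0:ℝ) 1) (hΓ0 : Γ0 ∈ Set.Ioo (0:ℝ) 1)
    (n K : ℕ) (hn : 2 ≤ n) (D S : Ω → ℕ)
    (h : IsCompoundBinomialPair P μ1 μ0 Γ1 Γ0 n K D S) :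
    P {ω | D ω = 0} = ENNReal.ofReal
      (∑ ℓ ∈ Finset.range (K+1),
        (K.choose ℓ : ℝ) * μ1 ^ ℓ * μ0 ^ (K-ℓ) * (1 - Γ1^ℓ * Γ0^(K-ℓ)) ^ (n-1)) := by
  obtain ⟨hD, hS, hpmf⟩ := h
  set q : ℕ → ℝ := fun ℓ => Γ1 ^ ℓ * Γ0 ^ (K - ℓ) with hq_def
  have hq01 : ∀ ℓ, 0 < q ℓ ∧ q ℓ ≤ 1 := by
    intro ℓ
    constructor
    · exact mul_pos (pow_pos hΓ1.1 _) (pow_pos hΓ0.1 _)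
    · exact mul_le_one₀ (pow_le_one₀ hΓ1.1.le hΓ1.2.le) (pow_nonneg hΓ0.1.le _)
        (pow_le_one₀ hΓ0.1.le hΓ0.2.le)
  set pmfR : ℕ → ℕ → ℝ := fun d ℓ =>
    (K.choose ℓ : ℝ) * μ1 ^ ℓ * μ0 ^ (K - ℓ) * ((n - 1).choose d : ℝ) *
      (q ℓ) ^ d * (1 - q ℓ) ^ (n - 1 - d) with hpmfR_def
  have hnn : ∀ d ℓ, 0 ≤ pmfR d ℓ := by
    intro d ℓ
    have h1 := (hq01 ℓ).1
    have h2 := (hq01 ℓ).2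
    have : (0:ℝ) ≤ 1 - q ℓ := by linarith
    positivity
  set E : ℕ → ℕ → Set Ω := fun d ℓ => {ω | D ω = d ∧ S ω = ℓ} with hE_def
  have hEmeas : ∀ d ℓ, MeasurableSet (E d ℓ) := by
    intro d ℓ
    exact (hD (measurableSet_singleton d)).inter (hS (measurableSet_singleton ℓ))
  -- the grid
  set grid := Finset.range (n-1+1) ×ˢ Finset.range (K+1) with hgrid_def
  have hP : ∀ p ∈ grid, P (E p.1 p.2) = ENNReal.ofReal (pmfR p.1 p.2) := by
    intro p hp
    rw [Finset.mem_product, Finset.mem_range, Finset.mem_range] at hp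
    exact hpmf p.1 (Nat.lt_succ_iff.1 hp.1) p.2 (Nat.lt_succ_iff.1 hp.2)
  -- total sum is 1
  have hsum_d : ∀ ℓ, ∑ d ∈ Finset.range (n-1+1), pmfR d ℓ
      = (K.choose ℓ : ℝ) * μ1 ^ ℓ * μ0 ^ (K - ℓ) := by
    intro ℓ
    have : ∀ d ∈ Finset.range (n-1+1), pmfR d ℓ
        = (K.choose ℓ : ℝ) * μ1 ^ ℓ * μ0 ^ (K - ℓ) *
          (((n-1).choose d : ℝ) * (q ℓ) ^ d * (1 - q ℓ) ^ (n-1-d)) := by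
      intro d _; simp only [hpmfR_def]; ring
    rw [Finset.sum_congr rfl this, ← Finset.mul_sum, binom_sum]
    norm_num
  have htot : ∑ p ∈ grid, pmfR p.1 p.2 = 1 := by
    rw [hgrid_def, Finset.sum_product_right]
    have : ∀ ℓ ∈ Finset.range (K+1), ∑ d ∈ Finset.range (n-1+1), pmfR d ℓ
        = (K.choose ℓ : ℝ) * μ1 ^ ℓ * μ0 ^ (K - ℓ) := fun ℓ _ => hsum_d ℓ
    rw [Finset.sum_congr rfl this, binom_sum]
    rw [show μ1 + μ0 = 1 by linarith]
    norm_num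
  -- disjointness
  have hdisjU : (↑grid : Set (ℕ × ℕ)).PairwiseDisjoint (fun p : ℕ × ℕ => E p.1 p.2) := by
    intro p _ p' _ hne
    apply Set.disjoint_left.2
    rintro ω ⟨hd, hs⟩ ⟨hd', hs'⟩
    exact hne (Prod.ext (hd ▸ hd') (hs ▸ hs'))
  have hU : P (⋃ p ∈ grid, E p.1 p.2) = 1 := by
    rw [measure_biUnion_finset hdisjU (fun p _ => hEmeas p.1 p.2)]
    have : ∀ p ∈ grid, P (E p.1 p.2) = ENNReal.ofReal (pmfR p.1 p.2) := hP
    rw [Finset.sum_congr rfl this, ← ENNReal.ofReal_sum_of_nonneg (fun p _ => hnn p.1 p.2),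
      htot, ENNReal.ofReal_one]
  have hUc : P (⋃ p ∈ grid, E p.1 p.2)ᶜ = 0 := by
    have hm : MeasurableSet (⋃ p ∈ grid, E p.1 p.2) :=
      Finset.measurableSet_biUnion grid (fun p _ => hEmeas p.1 p.2)
    rw [measure_compl hm (measure_ne_top P _), hU, measure_univ, tsub_self]
  have hzero : ∀ ℓ, K < ℓ → P (E 0 ℓ) = 0 := by
    intro ℓ hℓ
    apply measure_mono_null _ hUc
    intro ω hω
    simp only [Set.mem_compl_iff, Set.mem_iUnion]
    rintro ⟨p, hp, hmem⟩
    rw [Finset.mem_product, Finset.mem_range, Finset.mem_range] at hp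
    have : S ω = p.2 := hmem.2
    have h2 : S ω = ℓ := hω.2
    omega
  -- decompose {D = 0}
  have hDzero : {ω | D ω = 0} = ⋃ ℓ : ℕ, E 0 ℓ := by
    ext ω
    simp only [Set.mem_setOf_eq, Set.mem_iUnion, hE_def]
    exact ⟨fun h => ⟨S ω, h, rfl⟩, fun ⟨ℓ, h, _⟩ => h⟩
  have hdisj0 : Pairwise (Function.onFun Disjoint (fun ℓ => E 0 ℓ)) := by
    intro ℓ ℓ' hne
    apply Set.disjoint_left.2
    rintro ω ⟨_, hs⟩ ⟨_, hs'⟩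
    exact hne (hs ▸ hs')
  rw [hDzero, measure_iUnion hdisj0 (fun ℓ => hEmeas 0 ℓ)]
  rw [tsum_eq_sum (s := Finset.range (K+1))
    (fun ℓ hℓ => hzero ℓ (by simpa using Nat.lt_of_succ_le (Nat.not_lt.1 (fun h => hℓ (Finset.mem_range.2 h)))))]
  rw [ENNReal.ofReal_sum_of_nonneg]
  · apply Finset.sum_congr rfl
    intro ℓ hℓ
    have := hpmf 0 (Nat.zero_le _) ℓ (Nat.lt_succ_iff.1 (Finset.mem_range.1 hℓ))
    rw [this]
    congr 1
    simp [Nat.choose_zero_right]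
  · intro ℓ _
    have h1 := (hq01 ℓ).1
    have h2 := (hq01 ℓ).2
    have : (0:ℝ) ≤ 1 - q ℓ := by linarith
    positivity

lemma lognat_atTop : Tendsto (fun n : ℕ => Real.log n) atTop atTop :=
  Real.tendsto_log_atTop.comp tendsto_natCast_atTop_atTop

lemma L_atTop (ρ : ℝ) (hρ : 0 < ρ) (L : ℕ → ℕ)
    (hL : Tendsto (fun n => (L n : ℝ) / (ρ * Real.log n)) atTop (nhds 1)) :
    Tendsto (fun n => (L n : ℝ)) atTop atTop := by
  have hlog : Tendsto (fun n : ℕ => ρ * Real.log n) atTop atTop :=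
    lognat_atTop.const_mul_atTop hρ
  have := hL.pos_mul_atTop one_pos hlog
  apply this.congr'
  filter_upwards [eventually_ge_atTop 2] with n hn
  have hpos : 0 < Real.log n := Real.log_pos (by exact_mod_cast (show (1:ℕ) < n by omega))
  field_simp

lemma L_nat_atTop (ρ : ℝ) (hρ : 0 < ρ) (L : ℕ → ℕ)
    (hL : Tendsto (fun n => (L n : ℝ) / (ρ * Real.log n)) atTop (nhds 1)) :
    Tendsto L atTop atTop :=
  tendsto_natCast_atTop_iff.1 (L_atTop ρ hρ L hL)

lemma logcomb_atBot (ρ γ : ℝ) (hρ : 0 < ρ) (L : ℕ → ℕ)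
    (hL : Tendsto (fun n => (L n : ℝ) / (ρ * Real.log n)) atTop (nhds 1))
    (hneg : 1 + γ * ρ < 0) :
    Tendsto (fun n : ℕ => Real.log n + γ * (L n : ℝ)) atTop atBot := by
  have hbr : Tendsto (fun n : ℕ => 1 + γ * ρ * ((L n : ℝ) / (ρ * Real.log n)))
      atTop (nhds (1 + γ * ρ)) := by
    have := (hL.const_mul (γ * ρ)).const_add 1
    simpa using this
  have := lognat_atTop.atTop_mul_neg hneg hbr
  apply this.congr'
  filter_upwards [eventually_ge_atTop 2] with n hn
  have hpos : 0 < Real.log n := Real.log_pos (by exact_mod_cast (show (1:ℕ) < n by omega))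
  field_simp

lemma logcomb_atTop (ρ γ : ℝ) (hρ : 0 < ρ) (L : ℕ → ℕ)
    (hL : Tendsto (fun n => (L n : ℝ) / (ρ * Real.log n)) atTop (nhds 1))
    (hpos : 0 < 1 + γ * ρ) :
    Tendsto (fun n : ℕ => Real.log n + γ * (L n : ℝ)) atTop atTop := by
  have hbr : Tendsto (fun n : ℕ => 1 + γ * ρ * ((L n : ℝ) / (ρ * Real.log n)))
      atTop (nhds (1 + γ * ρ)) := by
    have := (hL.const_mul (γ * ρ)).const_add 1
    simpa using this
  have := hbr.pos_mul_atTop hpos lognat_atTop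
  apply this.congr'
  filter_upwards [eventually_ge_atTop 2] with n hn
  have hposl : 0 < Real.log n := Real.log_pos (by exact_mod_cast (show (1:ℕ) < n by omega))
  field_simp

section Bounds

variable (μ1 μ0 Γ1 Γ0 : ℝ)

lemma sum_w_eq_one (hμ : μ0 + μ1 = 1) (K : ℕ) :
    ∑ ℓ ∈ Finset.range (K+1), (K.choose ℓ : ℝ) * μ1 ^ ℓ * μ0 ^ (K-ℓ) = 1 := by
  rw [binom_sum, show μ1 + μ0 = 1 by linarith]
  norm_num

lemma bound_sub (hμ1 : μ1 ∈ Set.Ioo (0:ℝ) 1) (hμ0 : μ0 ∈ Set.Ioo (0:ℝ) 1)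
    (hμ : μ0 + μ1 = 1) (hΓ1 : Γ1 ∈ Set.Ioo (0:ℝ) 1) (hΓ0 : Γ0 ∈ Set.Ioo (0:ℝ) 1)
    (ε : ℝ) (hε : 0 < ε) (n K : ℕ) (hn : 2 ≤ n) :
    1 - ∑ ℓ ∈ Finset.range (K+1),
        (K.choose ℓ : ℝ) * μ1 ^ ℓ * μ0 ^ (K-ℓ) * (1 - Γ1^ℓ * Γ0^(K-ℓ)) ^ (n-1)
    ≤ (∑ ℓ ∈ (Finset.range (K+1)).filter
          (fun (ℓ : ℕ) => (ℓ:ℝ) < (μ1 - ε) * K ∨ (μ1 + ε) * K < (ℓ:ℝ)),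
        (K.choose ℓ : ℝ) * μ1 ^ ℓ * μ0 ^ (K-ℓ))
      + n * Real.exp ((μ1 * Real.log Γ1 + (1-μ1) * Real.log Γ0
          + ε * (|Real.log Γ1 - Real.log Γ0| + 1)) * K) := by
  set q : ℕ → ℝ := fun ℓ => Γ1 ^ ℓ * Γ0 ^ (K - ℓ) with hq_def
  set w : ℕ → ℝ := fun ℓ => (K.choose ℓ : ℝ) * μ1 ^ ℓ * μ0 ^ (K-ℓ) with hw_def
  set e : ℝ := Real.exp ((μ1 * Real.log Γ1 + (1-μ1) * Real.log Γ0
      + ε * (|Real.log Γ1 - Real.log Γ0| + 1)) * K) with he_def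
  have hwnn : ∀ ℓ, 0 ≤ w ℓ := fun ℓ =>
    mul_nonneg (mul_nonneg (Nat.cast_nonneg _) (pow_nonneg hμ1.1.le _)) (pow_nonneg hμ0.1.le _)
  have hsumw : ∑ ℓ ∈ Finset.range (K+1), w ℓ = 1 := sum_w_eq_one μ1 μ0 hμ K
  have hq01 : ∀ ℓ, 0 < q ℓ ∧ q ℓ ≤ 1 := by
    intro ℓ
    refine ⟨mul_pos (pow_pos hΓ1.1 _) (pow_pos hΓ0.1 _), ?_⟩
    exact mul_le_one₀ (pow_le_one₀ hΓ1.1.le hΓ1.2.le) (pow_nonneg hΓ0.1.le _)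
      (pow_le_one₀ hΓ0.1.le hΓ0.2.le)
  set Pred : ℕ → Prop := fun ℓ => (ℓ:ℝ) < (μ1 - ε) * K ∨ (μ1 + ε) * K < (ℓ:ℝ) with hPred_def
  have key : ∑ ℓ ∈ Finset.range (K+1), w ℓ * (1 - (1 - q ℓ) ^ (n-1))
      = 1 - ∑ ℓ ∈ Finset.range (K+1), w ℓ * (1 - q ℓ) ^ (n-1) := by
    have h' : ∑ ℓ ∈ Finset.range (K+1), w ℓ * (1 - (1 - q ℓ) ^ (n-1))
        = ∑ ℓ ∈ Finset.range (K+1), (w ℓ - w ℓ * (1 - q ℓ) ^ (n-1)) :=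
      Finset.sum_congr rfl (fun ℓ _ => by ring)
    rw [h', Finset.sum_sub_distrib, hsumw]
  have hsplit := Finset.sum_filter_add_sum_filter_not (Finset.range (K+1)) Pred
    (fun ℓ => w ℓ * (1 - (1 - q ℓ) ^ (n-1)))
  have part1 : ∑ ℓ ∈ (Finset.range (K+1)).filter Pred, w ℓ * (1 - (1 - q ℓ) ^ (n-1))
      ≤ ∑ ℓ ∈ (Finset.range (K+1)).filter Pred, w ℓ := by
    apply Finset.sum_le_sum
    intro ℓ _
    have h1 := (hq01 ℓ).1
    have h2 := (hq01 ℓ).2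
    nlinarith [pow_nonneg (show (0:ℝ) ≤ 1 - q ℓ by linarith) (n-1), hwnn ℓ]
  have part2 : ∑ ℓ ∈ (Finset.range (K+1)).filter (fun ℓ => ¬ Pred ℓ),
        w ℓ * (1 - (1 - q ℓ) ^ (n-1))
      ≤ n * e := by
    have step : ∀ ℓ ∈ (Finset.range (K+1)).filter (fun ℓ => ¬ Pred ℓ),
        w ℓ * (1 - (1 - q ℓ) ^ (n-1)) ≤ w ℓ * (n * e) := by
      intro ℓ hℓ
      simp only [Finset.mem_filter, Finset.mem_range, hPred_def, not_or, not_lt] at hℓ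
      have hℓK := Nat.lt_succ_iff.1 hℓ.1
      have hge := hℓ.2.1
      have hle := hℓ.2.2
      have hqle : q ℓ ≤ e :=
        (q_bounds Γ1 Γ0 μ1 hΓ1.1 hΓ0.1 ε hε.le K ℓ hℓK hge hle).1
      have h1 := (hq01 ℓ).1
      have h2 := (hq01 ℓ).2
      have hb : 1 + ((n-1 : ℕ):ℝ) * (-(q ℓ)) ≤ (1 + (-(q ℓ))) ^ (n-1) :=
        one_add_mul_le_pow (by linarith) (n-1)
      have hbern : 1 - (1 - q ℓ) ^ (n-1) ≤ ((n-1 : ℕ):ℝ) * q ℓ := by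
        have : (1 : ℝ) + (-(q ℓ)) = 1 - q ℓ := by ring
        rw [this] at hb
        linarith
      have hm : ((n-1 : ℕ):ℝ) ≤ n := by
        have : (n-1 : ℕ) ≤ n := Nat.sub_le n 1
        exact_mod_cast this
      have hcast : (0:ℝ) ≤ ((n-1:ℕ):ℝ) := Nat.cast_nonneg _
      have hmono : 1 - (1 - q ℓ) ^ (n-1) ≤ (n:ℝ) * e := by
        calc 1 - (1 - q ℓ) ^ (n-1) ≤ ((n-1 : ℕ):ℝ) * q ℓ := hbern
          _ ≤ (n:ℝ) * e := by nlinarith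
      have := hwnn ℓ
      nlinarith
    calc ∑ ℓ ∈ (Finset.range (K+1)).filter (fun ℓ => ¬ Pred ℓ),
          w ℓ * (1 - (1 - q ℓ) ^ (n-1))
        ≤ ∑ ℓ ∈ (Finset.range (K+1)).filter (fun ℓ => ¬ Pred ℓ), w ℓ * (n * e) :=
          Finset.sum_le_sum step
      _ = (∑ ℓ ∈ (Finset.range (K+1)).filter (fun ℓ => ¬ Pred ℓ), w ℓ) * (n * e) := by
          rw [Finset.sum_mul]
      _ ≤ 1 * (n * e) := by
          apply mul_le_mul_of_nonneg_right _ (by positivity)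
          rw [← hsumw]
          exact Finset.sum_le_sum_of_subset_of_nonneg (Finset.filter_subset _ _)
            (fun ℓ _ _ => hwnn ℓ)
      _ = n * e := one_mul _
  linarith

lemma bound_F (hμ1 : μ1 ∈ Set.Ioo (0:ℝ) 1) (hμ0 : μ0 ∈ Set.Ioo (0:ℝ) 1)
    (hμ : μ0 + μ1 = 1) (hΓ1 : Γ1 ∈ Set.Ioo (0:ℝ) 1) (hΓ0 : Γ0 ∈ Set.Ioo (0:ℝ) 1)
    (ε : ℝ) (hε : 0 < ε) (n K : ℕ) (hn : 2 ≤ n) :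
    ∑ ℓ ∈ Finset.range (K+1),
        (K.choose ℓ : ℝ) * μ1 ^ ℓ * μ0 ^ (K-ℓ) * (1 - Γ1^ℓ * Γ0^(K-ℓ)) ^ (n-1)
    ≤ (∑ ℓ ∈ (Finset.range (K+1)).filter
          (fun (ℓ : ℕ) => (ℓ:ℝ) < (μ1 - ε) * K ∨ (μ1 + ε) * K < (ℓ:ℝ)),
        (K.choose ℓ : ℝ) * μ1 ^ ℓ * μ0 ^ (K-ℓ))
      + Real.exp (-((n:ℝ)/2 * Real.exp ((μ1 * Real.log Γ1 + (1-μ1) * Real.log Γ0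
          - ε * (|Real.log Γ1 - Real.log Γ0| + 1)) * K))) := by
  set q : ℕ → ℝ := fun ℓ => Γ1 ^ ℓ * Γ0 ^ (K - ℓ) with hq_def
  set w : ℕ → ℝ := fun ℓ => (K.choose ℓ : ℝ) * μ1 ^ ℓ * μ0 ^ (K-ℓ) with hw_def
  set e : ℝ := Real.exp ((μ1 * Real.log Γ1 + (1-μ1) * Real.log Γ0
      - ε * (|Real.log Γ1 - Real.log Γ0| + 1)) * K) with he_def
  have hwnn : ∀ ℓ, 0 ≤ w ℓ := fun ℓ =>
    mul_nonneg (mul_nonneg (Nat.cast_nonneg _) (pow_nonneg hμ1.1.le _)) (pow_nonneg hμ0.1.le _)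
  have hsumw : ∑ ℓ ∈ Finset.range (K+1), w ℓ = 1 := sum_w_eq_one μ1 μ0 hμ K
  have hq01 : ∀ ℓ, 0 < q ℓ ∧ q ℓ ≤ 1 := by
    intro ℓ
    refine ⟨mul_pos (pow_pos hΓ1.1 _) (pow_pos hΓ0.1 _), ?_⟩
    exact mul_le_one₀ (pow_le_one₀ hΓ1.1.le hΓ1.2.le) (pow_nonneg hΓ0.1.le _)
      (pow_le_one₀ hΓ0.1.le hΓ0.2.le)
  set Pred : ℕ → Prop := fun ℓ => (ℓ:ℝ) < (μ1 - ε) * K ∨ (μ1 + ε) * K < (ℓ:ℝ) with hPred_def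
  have hsplit := Finset.sum_filter_add_sum_filter_not (Finset.range (K+1)) Pred
    (fun ℓ => w ℓ * (1 - q ℓ) ^ (n-1))
  have part1 : ∑ ℓ ∈ (Finset.range (K+1)).filter Pred, w ℓ * (1 - q ℓ) ^ (n-1)
      ≤ ∑ ℓ ∈ (Finset.range (K+1)).filter Pred, w ℓ := by
    apply Finset.sum_le_sum
    intro ℓ _
    have h1 := (hq01 ℓ).1
    have h2 := (hq01 ℓ).2
    have hp1 : (1 - q ℓ) ^ (n-1) ≤ 1 :=
      pow_le_one₀ (by linarith) (by linarith)
    nlinarith [hwnn ℓ]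
  have part2 : ∑ ℓ ∈ (Finset.range (K+1)).filter (fun ℓ => ¬ Pred ℓ),
        w ℓ * (1 - q ℓ) ^ (n-1)
      ≤ Real.exp (-((n:ℝ)/2 * e)) := by
    have step : ∀ ℓ ∈ (Finset.range (K+1)).filter (fun ℓ => ¬ Pred ℓ),
        w ℓ * (1 - q ℓ) ^ (n-1) ≤ w ℓ * Real.exp (-((n:ℝ)/2 * e)) := by
      intro ℓ hℓ
      simp only [Finset.mem_filter, Finset.mem_range, hPred_def, not_or, not_lt] at hℓ
      have hℓK := Nat.lt_succ_iff.1 hℓ.1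
      have hge := hℓ.2.1
      have hle := hℓ.2.2
      have hqge : e ≤ q ℓ :=
        (q_bounds Γ1 Γ0 μ1 hΓ1.1 hΓ0.1 ε hε.le K ℓ hℓK hge hle).2
      have h1 := (hq01 ℓ).1
      have h2 := (hq01 ℓ).2
      have hbound : (1 - q ℓ) ^ (n-1) ≤ Real.exp (-((n:ℝ)/2 * e)) := by
        calc (1 - q ℓ) ^ (n-1) ≤ (Real.exp (-(q ℓ))) ^ (n-1) := by
              apply pow_le_pow_left₀ (by linarith)
              have := Real.add_one_le_exp (-(q ℓ))
              linarith
          _ = Real.exp (((n-1:ℕ):ℝ) * (-(q ℓ))) := (Real.exp_nat_mul _ _).symm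
          _ ≤ Real.exp (-((n:ℝ)/2 * e)) := by
              apply Real.exp_le_exp.2
              have hcast : ((n-1:ℕ):ℝ) = (n:ℝ) - 1 := by
                rw [Nat.cast_sub (by omega)]; norm_num
              rw [hcast]
              have hn2 : (2:ℝ) ≤ n := by exact_mod_cast hn
              have hepos : 0 < e := Real.exp_pos _
              nlinarith
      nlinarith [hwnn ℓ, Real.exp_pos (-((n:ℝ)/2 * e)), pow_nonneg (show (0:ℝ) ≤ 1 - q ℓ by linarith) (n-1)]
    calc ∑ ℓ ∈ (Finset.range (K+1)).filter (fun ℓ => ¬ Pred ℓ),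
          w ℓ * (1 - q ℓ) ^ (n-1)
        ≤ ∑ ℓ ∈ (Finset.range (K+1)).filter (fun ℓ => ¬ Pred ℓ),
          w ℓ * Real.exp (-((n:ℝ)/2 * e)) := Finset.sum_le_sum step
      _ = (∑ ℓ ∈ (Finset.range (K+1)).filter (fun ℓ => ¬ Pred ℓ), w ℓ)
            * Real.exp (-((n:ℝ)/2 * e)) := by rw [Finset.sum_mul]
      _ ≤ 1 * Real.exp (-((n:ℝ)/2 * e)) := by
          apply mul_le_mul_of_nonneg_right _ (Real.exp_pos _).le
          rw [← hsumw]
          exact Finset.sum_le_sum_of_subset_of_nonneg (Finset.filter_subset _ _)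
            (fun ℓ _ _ => hwnn ℓ)
      _ = Real.exp (-((n:ℝ)/2 * e)) := one_mul _
  linarith

end Bounds

section FRange

variable (μ1 μ0 Γ1 Γ0 : ℝ)

lemma F_range (hμ1 : μ1 ∈ Set.Ioo (0:ℝ) 1) (hμ0 : μ0 ∈ Set.Ioo (0:ℝ) 1)
    (hμ : μ0 + μ1 = 1) (hΓ1 : Γ1 ∈ Set.Ioo (0:ℝ) 1) (hΓ0 : Γ0 ∈ Set.Ioo (0:ℝ) 1)
    (n K : ℕ) :
    0 ≤ (∑ ℓ ∈ Finset.range (K+1),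
        (K.choose ℓ : ℝ) * μ1 ^ ℓ * μ0 ^ (K-ℓ) * (1 - Γ1^ℓ * Γ0^(K-ℓ)) ^ (n-1))
    ∧ (∑ ℓ ∈ Finset.range (K+1),
        (K.choose ℓ : ℝ) * μ1 ^ ℓ * μ0 ^ (K-ℓ) * (1 - Γ1^ℓ * Γ0^(K-ℓ)) ^ (n-1)) ≤ 1 := by
  have hq01 : ∀ ℓ : ℕ, 0 < Γ1^ℓ * Γ0^(K-ℓ) ∧ Γ1^ℓ * Γ0^(K-ℓ) ≤ 1 := by
    intro ℓ
    refine ⟨mul_pos (pow_pos hΓ1.1 _) (pow_pos hΓ0.1 _), ?_⟩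
    exact mul_le_one₀ (pow_le_one₀ hΓ1.1.le hΓ1.2.le) (pow_nonneg hΓ0.1.le _)
      (pow_le_one₀ hΓ0.1.le hΓ0.2.le)
  have hwnn : ∀ ℓ : ℕ, 0 ≤ (K.choose ℓ : ℝ) * μ1 ^ ℓ * μ0 ^ (K-ℓ) := fun ℓ =>
    mul_nonneg (mul_nonneg (Nat.cast_nonneg _) (pow_nonneg hμ1.1.le _)) (pow_nonneg hμ0.1.le _)
  constructor
  · apply Finset.sum_nonneg
    intro ℓ _
    have h1 := (hq01 ℓ).1
    have h2 := (hq01 ℓ).2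
    exact mul_nonneg (hwnn ℓ) (pow_nonneg (by linarith) _)
  · calc ∑ ℓ ∈ Finset.range (K+1),
        (K.choose ℓ : ℝ) * μ1 ^ ℓ * μ0 ^ (K-ℓ) * (1 - Γ1^ℓ * Γ0^(K-ℓ)) ^ (n-1)
        ≤ ∑ ℓ ∈ Finset.range (K+1), (K.choose ℓ : ℝ) * μ1 ^ ℓ * μ0 ^ (K-ℓ) := by
          apply Finset.sum_le_sum
          intro ℓ _
          have h1 := (hq01 ℓ).1
          have h2 := (hq01 ℓ).2
          have := pow_le_one₀ (show (0:ℝ) ≤ 1 - Γ1^ℓ * Γ0^(K-ℓ) by linarith) (by linarith)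
            (n := n-1)
          nlinarith [hwnn ℓ]
      _ = 1 := sum_w_eq_one μ1 μ0 hμ K

end FRange

/-- zero-one law for `P(D_n = 0)` under a `ρ`-admissible scaling. -/
theorem stmt3 {Ω : Type*} [MeasurableSpace Ω] (P : Measure Ω) [IsProbabilityMeasure P]
    (μ0 μ1 Γ0 Γ1 : ℝ) (hμ0 : μ0 ∈ Set.Ioo (0:ℝ) 1) (hμ1 : μ1 ∈ Set.Ioo (0:ℝ) 1)
    (hμ : μ0 + μ1 = 1) (hΓ0 : Γ0 ∈ Set.Ioo (0:ℝ) 1) (hΓ1 : Γ1 ∈ Set.Ioo (0:ℝ) 1)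
    (ρ : ℝ) (hρ : 0 < ρ) (L : ℕ → ℕ) (hL : IsAdmissible ρ L)
    (D S : ℕ → Ω → ℕ)
    (hDS : ∀ n, 2 ≤ n → IsCompoundBinomialPair P μ1 μ0 Γ1 Γ0 n (L n) (D n) (S n)) :
    (1 + ρ * Real.log (Γ1 ^ μ1 * Γ0 ^ μ0) < 0 →
      Tendsto (fun n => P {ω | D n ω = 0}) atTop (nhds (1 : ℝ≥0∞))) ∧
    (0 < 1 + ρ * Real.log (Γ1 ^ μ1 * Γ0 ^ μ0) →
      Tendsto (fun n => P {ω | D n ω = 0}) atTop (nhds (0 : ℝ≥0∞))) := by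
  obtain ⟨hLpos, hL2⟩ := hL
  have hg : Real.log (Γ1 ^ μ1 * Γ0 ^ μ0) = μ1 * Real.log Γ1 + μ0 * Real.log Γ0 := by
    rw [Real.log_mul (Real.rpow_pos_of_pos hΓ1.1 μ1).ne' (Real.rpow_pos_of_pos hΓ0.1 μ0).ne',
      Real.log_rpow hΓ1.1, Real.log_rpow hΓ0.1]
  set a := Real.log Γ1 with ha_def
  set b := Real.log Γ0 with hb_def
  set A : ℝ := |a - b| + 1 with hA_def
  have hA : 0 < A := by positivity
  have hμ01 : μ0 = 1 - μ1 := by linarith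
  -- F n
  set F : ℕ → ℝ := fun n => ∑ ℓ ∈ Finset.range (L n + 1),
      ((L n).choose ℓ : ℝ) * μ1 ^ ℓ * μ0 ^ (L n - ℓ)
        * (1 - Γ1^ℓ * Γ0^(L n - ℓ)) ^ (n-1) with hF_def
  have hPF : ∀ᶠ n in atTop, P {ω | D n ω = 0} = ENNReal.ofReal (F n) := by
    filter_upwards [eventually_ge_atTop 2] with n hn
    exact prob_D_eq_zero P μ1 μ0 Γ1 Γ0 hμ1.1.le hμ0.1.le hμ hΓ1 hΓ0 n (L n) hn
      (D n) (S n) (hDS n hn)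
  have hF01 : ∀ n, 0 ≤ F n ∧ F n ≤ 1 := fun n =>
    F_range μ1 μ0 Γ1 Γ0 hμ1 hμ0 hμ hΓ1 hΓ0 n (L n)
  constructor
  · -- subcritical : limit 1
    intro hc
    rw [hg] at hc
    set c : ℝ := 1 + ρ * (μ1 * a + μ0 * b) with hc_def
    set ε : ℝ := -c / (2 * ρ * A) with hε_def
    have hε : 0 < ε := by
      apply div_pos (by linarith) (by positivity)
    have hεA : ε * A = -c / (2 * ρ) := by
      rw [hε_def]; field_simp
    set γ : ℝ := μ1 * a + (1 - μ1) * b + ε * A with hγ_def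
    have hγneg : 1 + γ * ρ < 0 := by
      rw [hγ_def, hεA, ← hμ01]
      have : 1 + (μ1 * a + μ0 * b + -c / (2 * ρ)) * ρ = c / 2 := by
        field_simp [hc_def]; ring
      rw [this]; linarith
    obtain ⟨κ, hκ, htail⟩ := tail_le μ1 μ0 hμ1 hμ0 hμ ε hε
    -- the bound
    have hbound : ∀ᶠ n in atTop,
        1 - (2 * Real.exp (-(κ * (L n : ℝ))) + (n:ℝ) * Real.exp (γ * (L n : ℝ))) ≤ F n := by
      filter_upwards [eventually_ge_atTop 2] with n hn
      have h1 := bound_sub μ1 μ0 Γ1 Γ0 hμ1 hμ0 hμ hΓ1 hΓ0 ε hε n (L n) hn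
      have h2 := htail (L n)
      rw [hF_def]
      simp only [← ha_def, ← hb_def, ← hA_def, ← hγ_def] at h1
      linarith
    -- limits
    have hLtop : Tendsto (fun n => (L n : ℝ)) atTop atTop := L_atTop ρ hρ L hL2
    have t1 : Tendsto (fun n : ℕ => 2 * Real.exp (-(κ * (L n : ℝ)))) atTop (nhds 0) := by
      have h1 : Tendsto (fun n : ℕ => -(κ * (L n : ℝ))) atTop atBot :=
        tendsto_neg_atTop_atBot.comp (hLtop.const_mul_atTop hκ)
      have h2 := Real.tendsto_exp_atBot.comp h1
      have := h2.const_mul (2:ℝ)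
      simpa using this
    have t2 : Tendsto (fun n : ℕ => (n:ℝ) * Real.exp (γ * (L n : ℝ))) atTop (nhds 0) := by
      have h1 := logcomb_atBot ρ γ hρ L hL2 hγneg
      have h2 := Real.tendsto_exp_atBot.comp h1
      apply h2.congr'
      filter_upwards [eventually_ge_atTop 1] with n hn
      have hn0 : (0:ℝ) < n := by exact_mod_cast hn
      simp only [Function.comp]
      rw [Real.exp_add, Real.exp_log hn0]
    have hFlim : Tendsto F atTop (nhds 1) := by
      apply tendsto_of_tendsto_of_tendsto_of_le_of_le'
        (g := fun n : ℕ => 1 - (2 * Real.exp (-(κ * (L n : ℝ)))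
          + (n:ℝ) * Real.exp (γ * (L n : ℝ)))) (h := fun _ => 1)
      · have := tendsto_const_nhds (x := (1:ℝ)) (f := atTop (α := ℕ)) |>.sub (t1.add t2)
        simpa using this
      · exact tendsto_const_nhds
      · exact hbound
      · exact Eventually.of_forall (fun n => (hF01 n).2)
    have := ENNReal.tendsto_ofReal hFlim
    rw [ENNReal.ofReal_one] at this
    exact this.congr' (hPF.mono (fun n h => h.symm))
  · -- supercritical : limit 0
    intro hc
    rw [hg] at hc
    set c : ℝ := 1 + ρ * (μ1 * a + μ0 * b) with hc_def
    set ε : ℝ := c / (2 * ρ * A) with hε_def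
    have hε : 0 < ε := by
      apply div_pos (by linarith) (by positivity)
    have hεA : ε * A = c / (2 * ρ) := by
      rw [hε_def]; field_simp
    set γ : ℝ := μ1 * a + (1 - μ1) * b - ε * A with hγ_def
    have hγpos : 0 < 1 + γ * ρ := by
      rw [hγ_def, hεA, ← hμ01]
      have : 1 + (μ1 * a + μ0 * b - c / (2 * ρ)) * ρ = c / 2 := by
        field_simp [hc_def]; ring
      rw [this]; linarith
    obtain ⟨κ, hκ, htail⟩ := tail_le μ1 μ0 hμ1 hμ0 hμ ε hε
    have hbound : ∀ᶠ n in atTop,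
        F n ≤ 2 * Real.exp (-(κ * (L n : ℝ)))
          + Real.exp (-((n:ℝ)/2 * Real.exp (γ * (L n : ℝ)))) := by
      filter_upwards [eventually_ge_atTop 2] with n hn
      have h1 := bound_F μ1 μ0 Γ1 Γ0 hμ1 hμ0 hμ hΓ1 hΓ0 ε hε n (L n) hn
      have h2 := htail (L n)
      rw [hF_def]
      simp only [← ha_def, ← hb_def, ← hA_def, ← hγ_def] at h1
      linarith
    have hLtop : Tendsto (fun n => (L n : ℝ)) atTop atTop := L_atTop ρ hρ L hL2
    have t1 : Tendsto (fun n : ℕ => 2 * Real.exp (-(κ * (L n : ℝ)))) atTop (nhds 0) := by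
      have h1 : Tendsto (fun n : ℕ => -(κ * (L n : ℝ))) atTop atBot :=
        tendsto_neg_atTop_atBot.comp (hLtop.const_mul_atTop hκ)
      have h2 := Real.tendsto_exp_atBot.comp h1
      have := h2.const_mul (2:ℝ)
      simpa using this
    have t2 : Tendsto (fun n : ℕ => Real.exp (-((n:ℝ)/2 * Real.exp (γ * (L n : ℝ)))))
        atTop (nhds 0) := by
      have hX : Tendsto (fun n : ℕ => (n:ℝ)/2 * Real.exp (γ * (L n : ℝ))) atTop atTop := by
        have h1 := logcomb_atTop ρ γ hρ L hL2 hγpos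
        have h2 := (Real.tendsto_exp_atTop.comp h1).atTop_div_const (by norm_num : (0:ℝ) < 2)
        apply h2.congr'
        filter_upwards [eventually_ge_atTop 1] with n hn
        have hn0 : (0:ℝ) < n := by exact_mod_cast hn
        simp only [Function.comp]
        rw [Real.exp_add, Real.exp_log hn0]
        ring
      exact Real.tendsto_exp_atBot.comp (tendsto_neg_atTop_atBot.comp hX)
    have hFlim : Tendsto F atTop (nhds 0) := by
      apply tendsto_of_tendsto_of_tendsto_of_le_of_le'
        (g := fun _ : ℕ => (0:ℝ))
        (h := fun n : ℕ => 2 * Real.exp (-(κ * (L n : ℝ)))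
          + Real.exp (-((n:ℝ)/2 * Real.exp (γ * (L n : ℝ)))))
      · exact tendsto_const_nhds
      · have := t1.add t2
        simpa using this
      · exact Eventually.of_forall (fun n => (hF01 n).1)
      · exact hbound
    have := ENNReal.tendsto_ofReal hFlim
    rw [ENNReal.ofReal_zero] at this
    exact this.congr' (hPF.mono (fun n h => h.symm))
end
end

section
/- Let A_1, A_2, … be i.i.d. {0,1}-valued random variables with P(A_ℓ = 1) = μ(1), and set S_L = A_1 + … + A_L. Let ρ > 0 and let n ↦ L_n be a ρ-admissible scaling. Then almost surely, as n → ∞, the sequence (n−1) Γ(1)^{S_{L_n}} Γ(0)^{L_n − S_{L_n}} converges to 0 if 1 + ρ·ln(Γ(1)^{μ(1)} Γ(0)^{μ(0)}) < 0, and converges to ∞ if 1 + ρ·ln(Γ(1)^{μ(1)} Γ(0)^{μ(0)}) > 0. -/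
open MeasureTheory ProbabilityTheory Filter Real
open scoped ENNReal NNReal

noncomputable section

/-- almost surely, `(n-1) Γ1^{S_{L_n}} Γ0^{L_n - S_{L_n}}` converges
to `0` if `1 + ρ ln(Γ1^μ1 Γ0^μ0) < 0` and to `∞` if `1 + ρ ln(Γ1^μ1 Γ0^μ0) > 0`. -/
theorem stmt12 {Ω : Type*} [MeasurableSpace Ω] (P : Measure Ω) [IsProbabilityMeasure P]
    (μ0 μ1 Γ0 Γ1 : ℝ) (hμ0 : μ0 ∈ Set.Ioo (0:ℝ) 1) (hμ1 : μ1 ∈ Set.Ioo (0:ℝ) 1)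
    (hμ : μ0 + μ1 = 1) (hΓ0 : Γ0 ∈ Set.Ioo (0:ℝ) 1) (hΓ1 : Γ1 ∈ Set.Ioo (0:ℝ) 1)
    (A : ℕ → Ω → ℕ)
    (hAmeas : ∀ ℓ, Measurable (A ℓ))
    (hA01 : ∀ ℓ ω, A ℓ ω ≤ 1)
    (hA1 : ∀ ℓ, P {ω | A ℓ ω = 1} = ENNReal.ofReal μ1)
    (hindep : iIndepFun A P)
    (ρ : ℝ) (hρ : 0 < ρ) (L : ℕ → ℕ) (hL : IsAdmissible ρ L) :
    (1 + ρ * Real.log (Γ1 ^ μ1 * Γ0 ^ μ0) < 0 →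
      ∀ᵐ ω ∂P, Tendsto (fun (n : ℕ) =>
          ((n : ℝ) - 1) * Γ1 ^ (∑ ℓ ∈ Finset.range (L n), A ℓ ω) *
            Γ0 ^ (L n - ∑ ℓ ∈ Finset.range (L n), A ℓ ω))
        atTop (nhds 0)) ∧
    (0 < 1 + ρ * Real.log (Γ1 ^ μ1 * Γ0 ^ μ0) →
      ∀ᵐ ω ∂P, Tendsto (fun (n : ℕ) =>
          ((n : ℝ) - 1) * Γ1 ^ (∑ ℓ ∈ Finset.range (L n), A ℓ ω) *
            Γ0 ^ (L n - ∑ ℓ ∈ Finset.range (L n), A ℓ ω))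
        atTop atTop) := by
  obtain ⟨hLpos, hLlim⟩ := hL
  obtain ⟨hΓ0p, hΓ0lt⟩ := hΓ0
  obtain ⟨hΓ1p, hΓ1lt⟩ := hΓ1
  have mcast : Measurable (fun m : ℕ => (m : ℝ)) := measurable_from_top
  set X : ℕ → Ω → ℝ := fun i ω => (A i ω : ℝ) with hXdef
  -- all A i have the same law
  have hsingle : ∀ i k, P (A i ⁻¹' {k}) = P (A 0 ⁻¹' {k}) := by
    intro i k
    have hpre : ∀ j, A j ⁻¹' ({1} : Set ℕ) = {ω | A j ω = 1} := fun j => rfl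
    have h01 : ∀ j, A j ⁻¹' ({0} : Set ℕ) = (A j ⁻¹' {1})ᶜ := by
      intro j; ext ω
      have := hA01 j ω
      simp only [Set.mem_preimage, Set.mem_singleton_iff, Set.mem_compl_iff]
      omega
    match k with
    | 0 =>
      rw [h01 i, h01 0,
        measure_compl ((hAmeas i) (measurableSet_singleton 1)) (measure_ne_top P _),
        measure_compl ((hAmeas 0) (measurableSet_singleton 1)) (measure_ne_top P _),
        hpre i, hpre 0, hA1 i, hA1 0]
    | 1 => rw [hpre i, hpre 0, hA1 i, hA1 0]
    | (k+2) =>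
      have he : ∀ j, A j ⁻¹' ({k+2} : Set ℕ) = ∅ := by
        intro j; ext ω; have := hA01 j ω
        simp only [Set.mem_preimage, Set.mem_singleton_iff, Set.mem_empty_iff_false,
          iff_false]
        omega
      rw [he i, he 0]
  have hmap : ∀ i, Measure.map (A i) P = Measure.map (A 0) P := by
    intro i
    refine Measure.ext_of_singleton fun k => ?_
    rw [Measure.map_apply (hAmeas i) (measurableSet_singleton k),
      Measure.map_apply (hAmeas 0) (measurableSet_singleton k)]
    exact hsingle i k
  have hident : ∀ i, IdentDistrib (X i) (X 0) P P := by
    intro i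
    exact IdentDistrib.comp ⟨(hAmeas i).aemeasurable, (hAmeas 0).aemeasurable, hmap i⟩ mcast
  have hpair : Pairwise (Function.onFun (IndepFun · · P) X) := by
    intro i j hij
    exact (hindep.indepFun hij).comp mcast mcast
  -- integrability and mean
  have hXind : X 0 = Set.indicator (A 0 ⁻¹' {1}) (fun _ => (1:ℝ)) := by
    funext ω
    rcases Nat.le_one_iff_eq_zero_or_eq_one.mp (hA01 0 ω) with h | h <;>
      simp [hXdef, h, Set.indicator_apply, Set.mem_preimage]
  have hmeas1 : MeasurableSet (A 0 ⁻¹' ({1} : Set ℕ)) :=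
    (hAmeas 0) (measurableSet_singleton 1)
  have hint : Integrable (X 0) P := by
    rw [hXind]
    exact (integrable_indicator_iff hmeas1).2
      (integrableOn_const (measure_ne_top P _))
  have hmean : (∫ ω, X 0 ω ∂P) = μ1 := by
    rw [hXind, integral_indicator_const (1:ℝ) hmeas1]
    have : P (A 0 ⁻¹' {1}) = ENNReal.ofReal μ1 := hA1 0
    rw [measureReal_def, this]
    simp [ENNReal.toReal_ofReal hμ1.1.le]
  have hSLLN := strong_law_ae_real X hint hpair hident
  rw [hmean] at hSLLN
  -- deterministic preparations
  have hlogn_top : Tendsto (fun n : ℕ => Real.log n) atTop atTop :=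
    Real.tendsto_log_atTop.comp tendsto_natCast_atTop_atTop
  have hlog_pos : ∀ᶠ n : ℕ in atTop, 0 < Real.log n := by
    filter_upwards [eventually_ge_atTop 2] with n hn
    have : (1:ℝ) < n := by exact_mod_cast Nat.lt_of_lt_of_le Nat.one_lt_two hn
    exact Real.log_pos this
  have hLtop : Tendsto L atTop atTop := by
    have h1 : Tendsto (fun n : ℕ => ρ * Real.log n) atTop atTop :=
      hlogn_top.const_mul_atTop hρ
    have h2 : Tendsto (fun n : ℕ =>
        ((L n : ℝ) / (ρ * Real.log n)) * (ρ * Real.log n)) atTop atTop :=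
      hLlim.pos_mul_atTop one_pos h1
    have h3 : Tendsto (fun n : ℕ => (L n : ℝ)) atTop atTop := by
      refine h2.congr' ?_
      filter_upwards [hlog_pos] with n hn
      exact div_mul_cancel₀ _ (by positivity)
    exact tendsto_natCast_atTop_iff.mp h3
  have hLdivlog : Tendsto (fun n : ℕ => (L n : ℝ) / Real.log n) atTop (nhds ρ) := by
    have h1 : Tendsto (fun n : ℕ =>
        ((L n : ℝ) / (ρ * Real.log n)) * ρ) atTop (nhds (1 * ρ)) :=
      hLlim.mul_const ρ
    rw [one_mul] at h1
    refine h1.congr' ?_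
    filter_upwards [hlog_pos] with n hn
    field_simp
  have hlog1 : Tendsto (fun n : ℕ => Real.log (((n:ℝ) - 1) / n) / Real.log n) atTop
      (nhds 0) := by
    have hratio : Tendsto (fun n : ℕ => ((n:ℝ) - 1) / n) atTop (nhds 1) := by
      have h1 : Tendsto (fun n : ℕ => 1 - 1 / (n:ℝ)) atTop (nhds (1 - 0)) :=
        tendsto_const_nhds.sub tendsto_one_div_atTop_nhds_zero_nat
      rw [sub_zero] at h1
      refine h1.congr' ?_
      filter_upwards [eventually_ge_atTop 1] with n hn
      have : (n:ℝ) ≠ 0 := by positivity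
      field_simp
    have hlg : Tendsto (fun n : ℕ => Real.log (((n:ℝ) - 1) / n)) atTop (nhds 0) := by
      have := (Real.continuousAt_log one_ne_zero).tendsto.comp hratio
      rwa [Real.log_one] at this
    exact hlg.div_atTop hlogn_top
  -- log identity
  have hc_eq : Real.log (Γ1 ^ μ1 * Γ0 ^ μ0) = μ1 * Real.log Γ1 + μ0 * Real.log Γ0 := by
    rw [Real.log_mul (Real.rpow_pos_of_pos hΓ1p _).ne' (Real.rpow_pos_of_pos hΓ0p _).ne',
      Real.log_rpow hΓ1p, Real.log_rpow hΓ0p]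
  -- the key per-ω limit
  have key : ∀ ω : Ω,
      Tendsto (fun k : ℕ => (∑ i ∈ Finset.range k, X i ω) / k) atTop (nhds μ1) →
      Tendsto (fun n : ℕ =>
          (Real.log ((n:ℝ) - 1) +
            ((∑ ℓ ∈ Finset.range (L n), A ℓ ω : ℕ) : ℝ) * Real.log Γ1 +
            (((L n : ℝ)) - ((∑ ℓ ∈ Finset.range (L n), A ℓ ω : ℕ) : ℝ)) * Real.log Γ0)
            / Real.log n)
        atTop (nhds (1 + ρ * Real.log (Γ1 ^ μ1 * Γ0 ^ μ0))) := by
    intro ω hω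
    set S : ℕ → ℝ := fun n => ((∑ ℓ ∈ Finset.range (L n), A ℓ ω : ℕ) : ℝ) with hSdef
    have hfrac : Tendsto (fun n : ℕ => S n / (L n : ℝ)) atTop (nhds μ1) := by
      have := hω.comp hLtop
      refine this.congr ?_
      intro n
      simp [hSdef, Function.comp, Nat.cast_sum, hXdef]
    have ht1 : Tendsto (fun n : ℕ => Real.log ((n:ℝ) - 1) / Real.log n) atTop
        (nhds 1) := by
      have h1 : Tendsto (fun n : ℕ =>
          1 + Real.log (((n:ℝ) - 1) / n) / Real.log n) atTop (nhds (1 + 0)) :=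
        tendsto_const_nhds.add hlog1
      rw [add_zero] at h1
      refine h1.congr' ?_
      filter_upwards [eventually_ge_atTop 2, hlog_pos] with n hn hln
      have hn1 : (0:ℝ) < (n:ℝ) - 1 := by
        have : (2:ℝ) ≤ n := by exact_mod_cast hn
        linarith
      have hnpos : (0:ℝ) < n := by positivity
      rw [Real.log_div hn1.ne' hnpos.ne']
      field_simp
      ring
    have hinner : Tendsto (fun n : ℕ =>
        (S n / (L n : ℝ)) * Real.log Γ1 + (1 - S n / (L n : ℝ)) * Real.log Γ0)
        atTop (nhds (μ1 * Real.log Γ1 + μ0 * Real.log Γ0)) := by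
      have h0 : Tendsto (fun n : ℕ => 1 - S n / (L n : ℝ)) atTop (nhds (1 - μ1)) :=
        tendsto_const_nhds.sub hfrac
      have h1 := (hfrac.mul_const (Real.log Γ1)).add (h0.mul_const (Real.log Γ0))
      have h2 : (1 - μ1) = μ0 := by linarith
      rwa [h2] at h1
    have ht2 : Tendsto (fun n : ℕ =>
        (S n * Real.log Γ1 + ((L n : ℝ) - S n) * Real.log Γ0) / Real.log n)
        atTop (nhds (ρ * (μ1 * Real.log Γ1 + μ0 * Real.log Γ0))) := by
      have h1 := hLdivlog.mul hinner
      refine h1.congr' ?_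
      filter_upwards [hlog_pos] with n hn
      have hLn : (0:ℝ) < (L n : ℝ) := by exact_mod_cast hLpos n
      field_simp
    have h := ht1.add ht2
    rw [hc_eq]
    refine Tendsto.congr ?_ h
    intro n
    simp only [hSdef]
    ring
  -- positivity / exp-log identity
  have hexp_eq : ∀ ω : Ω, ∀ᶠ n : ℕ in atTop,
      ((n : ℝ) - 1) * Γ1 ^ (∑ ℓ ∈ Finset.range (L n), A ℓ ω) *
          Γ0 ^ (L n - ∑ ℓ ∈ Finset.range (L n), A ℓ ω) =
        Real.exp (Real.log ((n:ℝ) - 1) +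
          ((∑ ℓ ∈ Finset.range (L n), A ℓ ω : ℕ) : ℝ) * Real.log Γ1 +
          (((L n : ℝ)) - ((∑ ℓ ∈ Finset.range (L n), A ℓ ω : ℕ) : ℝ)) * Real.log Γ0) := by
    intro ω
    filter_upwards [eventually_ge_atTop 2] with n hn
    set s : ℕ := ∑ ℓ ∈ Finset.range (L n), A ℓ ω with hsdef
    have hsle : s ≤ L n := by
      calc s ≤ ∑ ℓ ∈ Finset.range (L n), 1 := Finset.sum_le_sum fun i _ => hA01 i ω
      _ = L n := by simp
    have hn1 : (0:ℝ) < (n:ℝ) - 1 := by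
      have : (2:ℝ) ≤ n := by exact_mod_cast hn
      linarith
    have hcast : ((L n : ℝ)) - (s : ℝ) = ((L n - s : ℕ) : ℝ) := by
      rw [Nat.cast_sub hsle]
    rw [hcast, Real.exp_add, Real.exp_add, Real.exp_log hn1,
      ← Real.log_pow, ← Real.log_pow, Real.exp_log (by positivity),
      Real.exp_log (by positivity)]
  constructor
  · intro hc
    filter_upwards [hSLLN] with ω hω
    have hq := key ω hω
    have hg : Tendsto (fun n : ℕ =>
        Real.log ((n:ℝ) - 1) +
          ((∑ ℓ ∈ Finset.range (L n), A ℓ ω : ℕ) : ℝ) * Real.log Γ1 +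
          (((L n : ℝ)) - ((∑ ℓ ∈ Finset.range (L n), A ℓ ω : ℕ) : ℝ)) * Real.log Γ0)
        atTop atBot := by
      have h1 := hq.neg_mul_atTop hc hlogn_top
      refine h1.congr' ?_
      filter_upwards [hlog_pos] with n hn
      exact div_mul_cancel₀ _ hn.ne'
    have := Real.tendsto_exp_atBot.comp hg
    refine this.congr' ?_
    filter_upwards [hexp_eq ω] with n hn
    rw [hn]; rfl
  · intro hc
    filter_upwards [hSLLN] with ω hω
    have hq := key ω hω
    have hg : Tendsto (fun n : ℕ =>
        Real.log ((n:ℝ) - 1) +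
          ((∑ ℓ ∈ Finset.range (L n), A ℓ ω : ℕ) : ℝ) * Real.log Γ1 +
          (((L n : ℝ)) - ((∑ ℓ ∈ Finset.range (L n), A ℓ ω : ℕ) : ℝ)) * Real.log Γ0)
        atTop atTop := by
      have h1 := hq.pos_mul_atTop hc hlogn_top
      refine h1.congr' ?_
      filter_upwards [hlog_pos] with n hn
      exact div_mul_cancel₀ _ hn.ne'
    have := Real.tendsto_exp_atTop.comp hg
    refine this.congr' ?_
    filter_upwards [hexp_eq ω] with n hn
    rw [hn]; rfl
end
end

section
/- Assume 1 + ρ·ln(Γ(1)^{μ(1)} Γ(0)^{μ(0)}) > 0 for some ρ > 0, and let n ↦ L_n be a ρ-admissible scaling. For each n ≥ 2 let (D_n, S_n) be a compound-binomial degree pair with parameters (n, L_n). Then the ratio of the degree to its conditional mean converges to 1 in probability: for every δ > 0, lim_{n→∞} P( | D_n / ((n−1) Γ(1)^{S_n} Γ(0)^{L_n − S_n}) − 1 | > δ ) = 0. -/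
open MeasureTheory ProbabilityTheory Filter Real
open scoped ENNReal NNReal

noncomputable section

lemma bin_sum (N : ℕ) (p : ℝ) :
    ∑ d ∈ Finset.range (N+1), (N.choose d : ℝ) * p ^ d * (1 - p) ^ (N - d) = 1 := by
  have h := (add_pow p (1-p) N)
  simp only [add_sub_cancel, one_pow] at h
  calc ∑ d ∈ Finset.range (N+1), (N.choose d : ℝ) * p ^ d * (1 - p) ^ (N - d)
      = ∑ d ∈ Finset.range (N+1), p ^ d * (1 - p) ^ (N - d) * (N.choose d : ℝ) :=
        Finset.sum_congr rfl (fun d _ => by ring)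
    _ = 1 := h.symm

lemma bin_var (N : ℕ) (p : ℝ) :
    ∑ d ∈ Finset.range (N+1),
      ((N:ℝ)*p - d)^2 * ((N.choose d : ℝ) * p ^ d * (1 - p) ^ (N - d)) = N*p*(1-p) := by
  have h := congrArg (Polynomial.eval p) (bernsteinPolynomial.variance ℝ N)
  simp only [Polynomial.eval_finset_sum, bernsteinPolynomial, Polynomial.eval_mul,
    Polynomial.eval_pow, Polynomial.eval_sub, Polynomial.eval_smul, Polynomial.eval_one,
    Polynomial.eval_natCast, Polynomial.eval_X, nsmul_eq_mul, smul_eq_mul] at h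
  calc ∑ d ∈ Finset.range (N+1),
      ((N:ℝ)*p - d)^2 * ((N.choose d : ℝ) * p ^ d * (1 - p) ^ (N - d))
      = ∑ d ∈ Finset.range (N+1),
          ((N:ℝ)*p - d)^2 * ((N.choose d : ℝ) * p ^ d * (1 - p) ^ (N - d)) := rfl
    _ = N*p*(1-p) := by rw [← h]

lemma cheb_gen (N : ℕ) (p t : ℝ) (hp0 : 0 ≤ p) (hp1 : p ≤ 1) (ht : 0 < t)
    (Bad : Finset ℕ) (hsub : Bad ⊆ Finset.range (N+1))
    (hBad : ∀ d ∈ Bad, t ≤ |(d:ℝ) - N*p|) :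
    ∑ d ∈ Bad, (N.choose d : ℝ) * p ^ d * (1 - p) ^ (N - d) ≤ (N*p*(1-p))/t^2 := by
  have hb : ∀ d : ℕ, 0 ≤ (N.choose d : ℝ) * p ^ d * (1 - p) ^ (N - d) := fun d => by
    have h1 : (0:ℝ) ≤ 1 - p := by linarith
    positivity
  calc ∑ d ∈ Bad, (N.choose d : ℝ) * p ^ d * (1 - p) ^ (N - d)
      ≤ ∑ d ∈ Bad, (((N:ℝ)*p - d)^2/t^2) * ((N.choose d : ℝ) * p ^ d * (1 - p) ^ (N - d)) := by
        refine Finset.sum_le_sum (fun d hd => ?_)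
        have h1 : t^2 ≤ ((N:ℝ)*p - d)^2 := by
          have h0 := hBad d hd
          have h2 : t^2 ≤ |(d:ℝ) - N*p|^2 := pow_le_pow_left₀ ht.le h0 2
          rw [sq_abs] at h2; nlinarith [h2]
        have h3 : 1 ≤ ((N:ℝ)*p - d)^2/t^2 := (one_le_div (by positivity)).2 h1
        nlinarith [hb d, h3]
    _ ≤ ∑ d ∈ Finset.range (N+1),
          (((N:ℝ)*p - d)^2/t^2) * ((N.choose d : ℝ) * p ^ d * (1 - p) ^ (N - d)) := by
        refine Finset.sum_le_sum_of_subset_of_nonneg hsub (fun d _ _ => ?_)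
        have := hb d; positivity
    _ = (∑ d ∈ Finset.range (N+1),
          ((N:ℝ)*p - d)^2 * ((N.choose d : ℝ) * p ^ d * (1 - p) ^ (N - d)))/t^2 := by
        rw [Finset.sum_div]; exact Finset.sum_congr rfl (fun d _ => by ring)
    _ = (N*p*(1-p))/t^2 := by rw [bin_var]

lemma key_bound {Ω : Type*} [MeasurableSpace Ω] (P : Measure Ω) [IsProbabilityMeasure P]
    (μ0 μ1 Γ0 Γ1 : ℝ) (hμ0 : μ0 ∈ Set.Ioo (0:ℝ) 1) (hμ1 : μ1 ∈ Set.Ioo (0:ℝ) 1)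
    (hμ : μ0 + μ1 = 1) (hΓ0 : Γ0 ∈ Set.Ioo (0:ℝ) 1) (hΓ1 : Γ1 ∈ Set.Ioo (0:ℝ) 1)
    (n Ln : ℕ) (hn : 2 ≤ n) (hLn : 0 < Ln)
    (D S : Ω → ℕ) (h : IsCompoundBinomialPair P μ1 μ0 Γ1 Γ0 n Ln D S)
    (δ ε pmin : ℝ) (hδ : 0 < δ) (hε : 0 < ε) (hpmin : 0 < pmin)
    (hwin : ∀ ℓ : ℕ, ℓ ≤ Ln → |(ℓ:ℝ) - μ1*Ln| ≤ ε*Ln → pmin ≤ Γ1^ℓ * Γ0^(Ln-ℓ)) :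
    P {ω | |(D ω : ℝ) / (((n:ℝ)-1) * Γ1^(S ω) * Γ0^(Ln - S ω)) - 1| > δ}
      ≤ ENNReal.ofReal (μ1*μ0/(ε^2*Ln) + 1/(δ^2*(((n:ℝ)-1) * pmin))) := by
  obtain ⟨hD, hS, hpmf⟩ := h
  have hΓ1a := hΓ1.1; have hΓ1b := hΓ1.2
  have hΓ0a := hΓ0.1; have hΓ0b := hΓ0.2
  have hμ1a := hμ1.1; have hμ0a := hμ0.1
  set N : ℕ := n - 1 with hNdef
  have hN1 : 1 ≤ N := by omega
  have hNcast : ((N:ℝ)) = (n:ℝ) - 1 := by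
    rw [hNdef]; push_cast [Nat.cast_sub (by omega : 1 ≤ n)]; ring
  have hNpos : (0:ℝ) < N := by positivity
  -- basic quantities
  set p : ℕ → ℝ := fun ℓ => Γ1^ℓ * Γ0^(Ln-ℓ) with hpdef
  have hp0 : ∀ ℓ, 0 < p ℓ := fun ℓ => by
    show (0:ℝ) < Γ1^ℓ * Γ0^(Ln-ℓ); positivity
  have hp1 : ∀ ℓ, p ℓ ≤ 1 := fun ℓ => by
    show Γ1^ℓ * Γ0^(Ln-ℓ) ≤ 1
    exact mul_le_one₀ (pow_le_one₀ hΓ1.1.le hΓ1.2.le) (by positivity)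
      (pow_le_one₀ hΓ0.1.le hΓ0.2.le)
  set w : ℕ → ℝ := fun ℓ => (Ln.choose ℓ : ℝ) * μ1^ℓ * μ0^(Ln-ℓ) with hwdef
  have hw0 : ∀ ℓ, 0 ≤ w ℓ := fun ℓ => by
    show (0:ℝ) ≤ (Ln.choose ℓ : ℝ) * μ1^ℓ * μ0^(Ln-ℓ); positivity
  set b : ℕ → ℕ → ℝ := fun ℓ d => (N.choose d : ℝ) * (p ℓ)^d * (1 - p ℓ)^(N-d) with hbdef
  have hb0 : ∀ ℓ d, 0 ≤ b ℓ d := fun ℓ d => by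
    have := hp1 ℓ
    have h1 : (0:ℝ) ≤ 1 - p ℓ := by linarith
    show (0:ℝ) ≤ (N.choose d : ℝ) * (p ℓ)^d * (1 - p ℓ)^(N-d)
    have := (hp0 ℓ).le; positivity
  have hμ1' : (1:ℝ) - μ1 = μ0 := by linarith
  -- joint pmf rewritten
  have hjoint : ∀ x : ℕ × ℕ, x.1 ≤ Ln → x.2 ≤ N →
      P {ω | D ω = x.2 ∧ S ω = x.1} = ENNReal.ofReal (w x.1 * b x.1 x.2) := by
    rintro ⟨ℓ, d⟩ h1 h2
    rw [hpmf d h2 ℓ h1]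
    congr 1
    simp only [hwdef, hbdef, hpdef]
    ring
  -- the atoms
  set A : ℕ × ℕ → Set Ω := fun x => {ω | D ω = x.2 ∧ S ω = x.1} with hAdef
  have hAmeas : ∀ x, MeasurableSet (A x) := by
    intro x
    have : A x = D ⁻¹' {x.2} ∩ S ⁻¹' {x.1} := by
      ext ω; simp [hAdef]
    rw [this]
    exact (hD (measurableSet_singleton _)).inter (hS (measurableSet_singleton _))
  set T : Finset (ℕ × ℕ) := Finset.range (Ln+1) ×ˢ Finset.range (N+1) with hTdef
  have hmemT : ∀ x : ℕ × ℕ, x ∈ T ↔ x.1 ≤ Ln ∧ x.2 ≤ N := by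
    intro x
    simp [hTdef, Finset.mem_product, Nat.lt_succ_iff]
  have hdisj : (T : Set (ℕ × ℕ)).PairwiseDisjoint A := by
    intro x _ y _ hxy
    refine Set.disjoint_left.2 (fun ω hx hy => hxy ?_)
    obtain ⟨hx1, hx2⟩ := hx
    obtain ⟨hy1, hy2⟩ := hy
    exact Prod.ext (hx2.symm.trans hy2) (hx1.symm.trans hy1)
  have hUmeas : MeasurableSet (⋃ x ∈ T, A x) :=
    T.measurableSet_biUnion (fun x _ => hAmeas x)
  have hPU : P (⋃ x ∈ T, A x) = 1 := by
    rw [measure_biUnion_finset hdisj (fun x _ => hAmeas x)]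
    have h1 : ∀ x ∈ T, P (A x) = ENNReal.ofReal (w x.1 * b x.1 x.2) := by
      intro x hx
      rw [hmemT] at hx
      exact hjoint x hx.1 hx.2
    rw [Finset.sum_congr rfl h1]
    rw [← ENNReal.ofReal_sum_of_nonneg (fun x _ => mul_nonneg (hw0 x.1) (hb0 x.1 x.2))]
    have h2 : ∑ x ∈ T, w x.1 * b x.1 x.2 = 1 := by
      rw [hTdef, Finset.sum_product]
      have h3 : ∀ ℓ ∈ Finset.range (Ln+1), ∑ d ∈ Finset.range (N+1), w ℓ * b ℓ d = w ℓ := by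
        intro ℓ _
        rw [← Finset.mul_sum]
        have := bin_sum N (p ℓ)
        simp only [hbdef]
        rw [this, mul_one]
      rw [Finset.sum_congr rfl h3]
      have h4 : ∀ ℓ ∈ Finset.range (Ln+1), w ℓ =
          (Ln.choose ℓ : ℝ) * μ1^ℓ * (1-μ1)^(Ln-ℓ) := by
        intro ℓ _; simp only [hwdef, hμ1']
      rw [Finset.sum_congr rfl h4, bin_sum]
    rw [h2, ENNReal.ofReal_one]
  have hcompl : P ((⋃ x ∈ T, A x)ᶜ) = 0 := by
    rw [measure_compl hUmeas (measure_ne_top P _), hPU, measure_univ, tsub_self]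
  -- the bad set
  set Bads : Finset (ℕ × ℕ) :=
    T.filter (fun x => δ < |(x.2:ℝ)/((N:ℝ) * p x.1) - 1|) with hBadsdef
  -- event inclusion
  have hsubE : {ω | |(D ω : ℝ) / (((n:ℝ)-1) * Γ1^(S ω) * Γ0^(Ln - S ω)) - 1| > δ}
      ⊆ (⋃ x ∈ T, A x)ᶜ ∪ ⋃ x ∈ Bads, A x := by
    intro ω hω
    by_cases hU : ω ∈ ⋃ x ∈ T, A x
    · right
      rw [Set.mem_iUnion₂] at hU ⊢
      obtain ⟨x, hxT, hx⟩ := hU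
      refine ⟨x, ?_, hx⟩
      rw [hBadsdef, Finset.mem_filter]
      refine ⟨hxT, ?_⟩
      obtain ⟨hx1, hx2⟩ := hx
      have hrw : ((n:ℝ)-1) * Γ1^(S ω) * Γ0^(Ln - S ω) = (N:ℝ) * p x.1 := by
        rw [hx2, hpdef, hNcast]; ring
      have := hω
      simp only [Set.mem_setOf_eq] at this
      rw [hrw, hx1] at this
      exact this
    · left; exact hU
  -- main estimate
  calc P {ω | |(D ω : ℝ) / (((n:ℝ)-1) * Γ1^(S ω) * Γ0^(Ln - S ω)) - 1| > δ}
      ≤ P ((⋃ x ∈ T, A x)ᶜ ∪ ⋃ x ∈ Bads, A x) := measure_mono hsubE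
    _ ≤ P ((⋃ x ∈ T, A x)ᶜ) + P (⋃ x ∈ Bads, A x) := measure_union_le _ _
    _ = P (⋃ x ∈ Bads, A x) := by rw [hcompl, zero_add]
    _ ≤ ∑ x ∈ Bads, P (A x) := measure_biUnion_finset_le _ _
    _ = ENNReal.ofReal (∑ x ∈ Bads, w x.1 * b x.1 x.2) := by
        have h1 : ∀ x ∈ Bads, P (A x) = ENNReal.ofReal (w x.1 * b x.1 x.2) := by
          intro x hx
          rw [hBadsdef, Finset.mem_filter, hmemT] at hx
          exact hjoint x hx.1.1 hx.1.2
        rw [Finset.sum_congr rfl h1,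
          ← ENNReal.ofReal_sum_of_nonneg (fun x _ => mul_nonneg (hw0 x.1) (hb0 x.1 x.2))]
    _ ≤ ENNReal.ofReal (μ1*μ0/(ε^2*Ln) + 1/(δ^2*(((n:ℝ)-1) * pmin))) := by
        apply ENNReal.ofReal_le_ofReal
        set I : ℕ → ℝ := fun ℓ =>
          ∑ d ∈ (Finset.range (N+1)).filter (fun d : ℕ => δ < |(d:ℝ)/((N:ℝ)*p ℓ) - 1|), b ℓ d
          with hIdef
        have hstep1 : ∑ x ∈ Bads, w x.1 * b x.1 x.2
            = ∑ ℓ ∈ Finset.range (Ln+1), w ℓ * I ℓ := by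
          rw [hBadsdef, Finset.sum_filter, hTdef, Finset.sum_product]
          refine Finset.sum_congr rfl (fun ℓ _ => ?_)
          simp only [hIdef]
          rw [Finset.mul_sum, Finset.sum_filter]
        have hI1 : ∀ ℓ, I ℓ ≤ 1 := by
          intro ℓ
          calc I ℓ ≤ ∑ d ∈ Finset.range (N+1), b ℓ d :=
                Finset.sum_le_sum_of_subset_of_nonneg (Finset.filter_subset _ _)
                  (fun d _ _ => hb0 ℓ d)
            _ = 1 := bin_sum N (p ℓ)
        have hI2 : ∀ ℓ, ℓ ≤ Ln → |(ℓ:ℝ) - μ1*Ln| ≤ ε*Ln →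
            I ℓ ≤ 1/(δ^2*((N:ℝ)*pmin)) := by
          intro ℓ hℓ hwinℓ
          have hwl : pmin ≤ p ℓ := hwin ℓ hℓ hwinℓ
          have hplpos := hp0 ℓ
          have hNp : 0 < (N:ℝ) * p ℓ := by positivity
          have hbad2 : ∀ d ∈ (Finset.range (N+1)).filter
              (fun d : ℕ => δ < |(d:ℝ)/((N:ℝ)*p ℓ) - 1|),
              δ * ((N:ℝ) * p ℓ) ≤ |(d:ℝ) - (N:ℝ)*(p ℓ)| := by
            intro d hd
            rw [Finset.mem_filter] at hd
            have h5 := hd.2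
            have e : (d:ℝ)/((N:ℝ)*p ℓ) - 1 = ((d:ℝ) - (N:ℝ)*(p ℓ))/((N:ℝ)*p ℓ) := by
              field_simp
            rw [e, abs_div, abs_of_pos hNp] at h5
            exact ((lt_div_iff₀ hNp).1 h5).le
          have hch := cheb_gen N (p ℓ) (δ * ((N:ℝ) * p ℓ)) (hp0 ℓ).le (hp1 ℓ)
            (by positivity) _ (Finset.filter_subset _ _) hbad2
          calc I ℓ ≤ ((N:ℝ)*(p ℓ)*(1-p ℓ))/(δ*((N:ℝ)*p ℓ))^2 := hch
            _ = (1 - p ℓ)/(δ^2*((N:ℝ)*p ℓ)) := by field_simp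
            _ ≤ 1/(δ^2*((N:ℝ)*pmin)) := by
                apply div_le_div₀ zero_le_one (by linarith) (by positivity)
                have : (N:ℝ)*pmin ≤ (N:ℝ)*(p ℓ) := by nlinarith
                nlinarith [sq_nonneg δ, hδ]
        have hwsum : ∑ ℓ ∈ Finset.range (Ln+1), w ℓ = 1 := by
          have h4 : ∀ ℓ ∈ Finset.range (Ln+1), w ℓ =
              (Ln.choose ℓ : ℝ) * μ1^ℓ * (1-μ1)^(Ln-ℓ) := by
            intro ℓ _; simp only [hwdef, hμ1']
          rw [Finset.sum_congr rfl h4, bin_sum]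
        have hT0 : (0:ℝ) ≤ 1/(δ^2*((N:ℝ)*pmin)) := by positivity
        set W : Finset ℕ := (Finset.range (Ln+1)).filter
          (fun ℓ : ℕ => |(ℓ:ℝ) - μ1*Ln| ≤ ε*Ln) with hWdef
        set Wc : Finset ℕ := (Finset.range (Ln+1)).filter
          (fun ℓ : ℕ => ¬(|(ℓ:ℝ) - μ1*Ln| ≤ ε*Ln)) with hWcdef
        have hLnpos : (0:ℝ) < (Ln:ℝ) := by exact_mod_cast hLn
        have hgood : ∑ ℓ ∈ W, w ℓ * I ℓ ≤ 1/(δ^2*((N:ℝ)*pmin)) := by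
          calc ∑ ℓ ∈ W, w ℓ * I ℓ
              ≤ ∑ ℓ ∈ W, w ℓ * (1/(δ^2*((N:ℝ)*pmin))) := by
                refine Finset.sum_le_sum (fun ℓ hℓ => ?_)
                rw [hWdef, Finset.mem_filter, Finset.mem_range, Nat.lt_succ_iff] at hℓ
                exact mul_le_mul_of_nonneg_left (hI2 ℓ hℓ.1 hℓ.2) (hw0 ℓ)
            _ = (∑ ℓ ∈ W, w ℓ) * (1/(δ^2*((N:ℝ)*pmin))) := by
                rw [Finset.sum_mul]
            _ ≤ 1 * (1/(δ^2*((N:ℝ)*pmin))) := by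
                apply mul_le_mul_of_nonneg_right _ hT0
                rw [← hwsum, hWdef]
                exact Finset.sum_le_sum_of_subset_of_nonneg (Finset.filter_subset _ _)
                  (fun ℓ _ _ => hw0 ℓ)
            _ = 1/(δ^2*((N:ℝ)*pmin)) := one_mul _
        have hbadW : ∑ ℓ ∈ Wc, w ℓ * I ℓ ≤ μ1*μ0/(ε^2*Ln) := by
          have hbad3 : ∀ ℓ ∈ Wc, ε * (Ln:ℝ) ≤ |(ℓ:ℝ) - (Ln:ℝ)*μ1| := by
            intro ℓ hℓ
            rw [hWcdef, Finset.mem_filter] at hℓ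
            have h6 := hℓ.2
            push_neg at h6
            have e : (ℓ:ℝ) - (Ln:ℝ)*μ1 = (ℓ:ℝ) - μ1*(Ln:ℝ) := by ring
            rw [e]
            linarith [h6]
          have hsubW : Wc ⊆ Finset.range (Ln+1) := by
            rw [hWcdef]; exact Finset.filter_subset _ _
          have hch := cheb_gen Ln μ1 (ε * (Ln:ℝ)) hμ1a.le (by linarith [hμ0a])
            (by positivity) Wc hsubW hbad3
          calc ∑ ℓ ∈ Wc, w ℓ * I ℓ
              ≤ ∑ ℓ ∈ Wc, w ℓ := by
                refine Finset.sum_le_sum (fun ℓ _ => ?_)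
                exact mul_le_of_le_one_right (hw0 ℓ) (hI1 ℓ)
            _ = ∑ ℓ ∈ Wc, (Ln.choose ℓ : ℝ) * μ1^ℓ * (1-μ1)^(Ln-ℓ) := by
                refine Finset.sum_congr rfl (fun ℓ _ => ?_)
                simp only [hwdef, hμ1']
            _ ≤ ((Ln:ℝ)*μ1*(1-μ1))/(ε*(Ln:ℝ))^2 := hch
            _ = μ1*μ0/(ε^2*Ln) := by
                rw [hμ1']
                field_simp
        have hsplit : ∑ ℓ ∈ Finset.range (Ln+1), w ℓ * I ℓ
            = ∑ ℓ ∈ W, w ℓ * I ℓ + ∑ ℓ ∈ Wc, w ℓ * I ℓ := by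
          rw [hWdef, hWcdef]
          exact (Finset.sum_filter_add_sum_filter_not (Finset.range (Ln+1))
            (fun ℓ : ℕ => |(ℓ:ℝ) - μ1*Ln| ≤ ε*Ln) (fun ℓ => w ℓ * I ℓ)).symm
        rw [hstep1, hsplit, ← hNcast]
        linarith [hgood, hbadW]

/-- `D_n / E[D_n | S_n] → 1` in probability, where
`E[D_n | S_n] = (n-1) Γ1^{S_n} Γ0^{L_n - S_n}`. -/
theorem stmt13 {Ω : Type*} [MeasurableSpace Ω] (P : Measure Ω) [IsProbabilityMeasure P]
    (μ0 μ1 Γ0 Γ1 : ℝ) (hμ0 : μ0 ∈ Set.Ioo (0:ℝ) 1) (hμ1 : μ1 ∈ Set.Ioo (0:ℝ) 1)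
    (hμ : μ0 + μ1 = 1) (hΓ0 : Γ0 ∈ Set.Ioo (0:ℝ) 1) (hΓ1 : Γ1 ∈ Set.Ioo (0:ℝ) 1)
    (ρ : ℝ) (hρ : 0 < ρ)
    (hcond : 0 < 1 + ρ * Real.log (Γ1 ^ μ1 * Γ0 ^ μ0))
    (L : ℕ → ℕ) (hL : IsAdmissible ρ L)
    (D S : ℕ → Ω → ℕ)
    (hDS : ∀ n, 2 ≤ n → IsCompoundBinomialPair P μ1 μ0 Γ1 Γ0 n (L n) (D n) (S n)) :
    ∀ δ : ℝ, 0 < δ →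
      Tendsto (fun (n : ℕ) =>
          P {ω | |(D n ω : ℝ) /
              (((n : ℝ) - 1) * Γ1 ^ (S n ω) * Γ0 ^ (L n - S n ω)) - 1| > δ})
        atTop (nhds 0) := by
  intro δ hδ
  obtain ⟨hLpos, hLlim⟩ := hL
  obtain ⟨g, hgdef⟩ : ∃ x : ℝ, x = μ1 * Real.log Γ1 + μ0 * Real.log Γ0 := ⟨_, rfl⟩
  have hcond' : 0 < 1 + ρ * g := by
    have h1 : Real.log (Γ1 ^ μ1 * Γ0 ^ μ0) = g := by
      rw [Real.log_mul (Real.rpow_pos_of_pos hΓ1.1 μ1).ne' (Real.rpow_pos_of_pos hΓ0.1 μ0).ne',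
        Real.log_rpow hΓ1.1, Real.log_rpow hΓ0.1, hgdef]
    rwa [h1] at hcond
  obtain ⟨K, hKdef⟩ : ∃ x : ℝ, x = |Real.log Γ1| + |Real.log Γ0| := ⟨_, rfl⟩
  have hK : 0 < K := by
    have h1 : Real.log Γ1 < 0 := Real.log_neg hΓ1.1 hΓ1.2
    have h2 : 0 < |Real.log Γ1| := abs_pos.2 h1.ne
    have := abs_nonneg (Real.log Γ0)
    rw [hKdef]; linarith
  obtain ⟨ε, hεdef⟩ : ∃ x : ℝ, x = (1 + ρ*g)/(4*ρ*K) := ⟨_, rfl⟩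
  have hε : 0 < ε := by rw [hεdef]; positivity
  obtain ⟨a, hadef⟩ : ∃ x : ℝ, x = g - ε*K := ⟨_, rfl⟩
  have hεK : ε * K = (1 + ρ*g)/(4*ρ) := by
    rw [hεdef]; field_simp
  have h1a : 0 < 1 + ρ*a := by
    rw [hadef, mul_sub, hεK]
    have h2 : ρ * ((1 + ρ*g)/(4*ρ)) = (1 + ρ*g)/4 := by field_simp
    rw [h2]; linarith [hcond']
  -- window lower bound on the success probability
  have hwin : ∀ n : ℕ, ∀ ℓ : ℕ, ℓ ≤ L n → |(ℓ:ℝ) - μ1*(L n)| ≤ ε*(L n) →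
      Real.exp (a * L n) ≤ Γ1^ℓ * Γ0^(L n - ℓ) := by
    intro n ℓ hℓ habs
    have hcast : ((L n - ℓ : ℕ) : ℝ) = (L n : ℝ) - ℓ := by
      push_cast [Nat.cast_sub hℓ]; ring
    have e1 : Γ1^ℓ = Real.exp ((ℓ:ℝ) * Real.log Γ1) := by
      rw [Real.exp_nat_mul, Real.exp_log hΓ1.1]
    have e2 : Γ0^(L n - ℓ) = Real.exp (((L n : ℝ) - ℓ) * Real.log Γ0) := by
      rw [← hcast, Real.exp_nat_mul, Real.exp_log hΓ0.1]
    rw [e1, e2, ← Real.exp_add, Real.exp_le_exp]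
    set u : ℝ := (ℓ:ℝ) - μ1*(L n) with hudef
    have hu1 : -(ε*(L n)*|Real.log Γ1|) ≤ u * Real.log Γ1 := by
      have h3 : |u * Real.log Γ1| ≤ ε*(L n)*|Real.log Γ1| := by
        rw [abs_mul]
        exact mul_le_mul_of_nonneg_right habs (abs_nonneg _)
      linarith [neg_abs_le (u * Real.log Γ1)]
    have hu2 : -(ε*(L n)*|Real.log Γ0|) ≤ -u * Real.log Γ0 := by
      have h3 : |(-u) * Real.log Γ0| ≤ ε*(L n)*|Real.log Γ0| := by
        rw [abs_mul, abs_neg]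
        exact mul_le_mul_of_nonneg_right habs (abs_nonneg _)
      linarith [neg_abs_le ((-u) * Real.log Γ0)]
    have hμ1' : μ0 = 1 - μ1 := by linarith
    have e3 : (ℓ:ℝ) * Real.log Γ1 = μ1*(L n)*Real.log Γ1 + u * Real.log Γ1 := by
      rw [hudef]; ring
    have e4 : ((L n : ℝ) - ℓ) * Real.log Γ0
        = μ0*(L n)*Real.log Γ0 + (-u) * Real.log Γ0 := by
      rw [hudef, hμ1']; ring
    have e5 : a * (L n) = g*(L n) - ε*(L n)*K := by rw [hadef]; ring
    rw [e3, e4, e5, hgdef, hKdef]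
    have hLn0 : (0:ℝ) ≤ (L n : ℝ) := Nat.cast_nonneg _
    nlinarith [hu1, hu2]
  -- the upper bound for each n ≥ 2
  obtain ⟨bound, hbounddef⟩ : ∃ x : ℕ → ℝ, x = fun n =>
    μ1*μ0/(ε^2*(L n)) + 1/(δ^2*(((n:ℝ)-1) * Real.exp (a * L n))) := ⟨_, rfl⟩
  have key : ∀ n : ℕ, 2 ≤ n →
      P {ω | |(D n ω : ℝ) /
          (((n : ℝ) - 1) * Γ1 ^ (S n ω) * Γ0 ^ (L n - S n ω)) - 1| > δ}
        ≤ ENNReal.ofReal (bound n) := by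
    intro n hn
    rw [hbounddef]
    exact key_bound P μ0 μ1 Γ0 Γ1 hμ0 hμ1 hμ hΓ0 hΓ1 n (L n) hn (hLpos n)
      (D n) (S n) (hDS n hn) δ ε (Real.exp (a * L n)) hδ hε (Real.exp_pos _)
      (hwin n)
  -- the bound tends to 0
  have hlogtop : Tendsto (fun n : ℕ => ρ * Real.log n) atTop atTop :=
    (Real.tendsto_log_atTop.comp tendsto_natCast_atTop_atTop).const_mul_atTop hρ
  have hlogpos : ∀ᶠ n : ℕ in atTop, 0 < Real.log n := by
    filter_upwards [eventually_ge_atTop 2] with n hn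
    have : (1:ℝ) < n := by exact_mod_cast Nat.lt_of_lt_of_le Nat.one_lt_two hn
    exact Real.log_pos this
  have hLtop : Tendsto (fun n : ℕ => (L n : ℝ)) atTop atTop := by
    have h1 : Tendsto (fun n : ℕ => (L n : ℝ) / (ρ * Real.log n) * (ρ * Real.log n))
        atTop atTop := hLlim.pos_mul_atTop one_pos hlogtop
    refine h1.congr' ?_
    filter_upwards [hlogpos] with n hn
    have hne : ρ * Real.log n ≠ 0 := by positivity
    field_simp
  have hterm1 : Tendsto (fun n : ℕ => μ1*μ0/(ε^2*(L n))) atTop (nhds 0) :=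
    tendsto_const_nhds.div_atTop (hLtop.const_mul_atTop (by positivity : (0:ℝ) < ε^2))
  have hg1 : Tendsto (fun n : ℕ => Real.log n + a * L n) atTop atTop := by
    have h2 : Tendsto (fun n : ℕ => 1/ρ + a * ((L n : ℝ) / (ρ * Real.log n)))
        atTop (nhds (1/ρ + a)) := by
      have h3 := ((tendsto_const_nhds :
        Tendsto (fun _ : ℕ => a) atTop (nhds a))).mul hLlim
      rw [mul_one] at h3
      exact ((tendsto_const_nhds :
        Tendsto (fun _ : ℕ => 1/ρ) atTop (nhds (1/ρ)))).add h3
    have h4 : 0 < 1/ρ + a := by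
      have h4e : 1/ρ + a = (1 + ρ*a)/ρ := by field_simp
      rw [h4e]; exact div_pos h1a hρ
    have h5 := hlogtop.atTop_mul_pos h4 h2
    refine h5.congr' ?_
    filter_upwards [hlogpos] with n hn
    have hne : Real.log n ≠ 0 := ne_of_gt hn
    field_simp
  have hftop : Tendsto (fun n : ℕ => ((n:ℝ)-1) * Real.exp (a * L n)) atTop atTop := by
    have h6 : Tendsto (fun n : ℕ => Real.exp (Real.log n + a * L n - Real.log 2))
        atTop atTop :=
      Real.tendsto_exp_atTop.comp (tendsto_atTop_add_const_right _ _ hg1)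
    refine tendsto_atTop_mono' atTop ?_ h6
    filter_upwards [eventually_ge_atTop 2] with n hn
    have hn2 : (2:ℝ) ≤ (n:ℝ) := by exact_mod_cast hn
    have hpos : (0:ℝ) < (n:ℝ) - 1 := by linarith
    have h7 : Real.log n - Real.log 2 ≤ Real.log ((n:ℝ)-1) := by
      rw [← Real.log_div (by positivity) (by norm_num)]
      apply Real.log_le_log (by positivity)
      linarith
    calc Real.exp (Real.log n + a * L n - Real.log 2)
        = Real.exp (Real.log n - Real.log 2) * Real.exp (a * L n) := by
          rw [← Real.exp_add]; ring_nf
      _ ≤ Real.exp (Real.log ((n:ℝ)-1)) * Real.exp (a * L n) := by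
          apply mul_le_mul_of_nonneg_right _ (Real.exp_pos _).le
          rw [Real.exp_le_exp]; linarith
      _ = ((n:ℝ)-1) * Real.exp (a * L n) := by rw [Real.exp_log hpos]
  have hterm2 : Tendsto (fun n : ℕ => 1/(δ^2*(((n:ℝ)-1) * Real.exp (a * L n))))
      atTop (nhds 0) :=
    tendsto_const_nhds.div_atTop (hftop.const_mul_atTop (by positivity : (0:ℝ) < δ^2))
  have hbound0 : Tendsto bound atTop (nhds 0) := by
    rw [hbounddef]
    have := hterm1.add hterm2
    rwa [add_zero] at this
  -- squeeze
  have hupper : Tendsto (fun n => ENNReal.ofReal (bound n)) atTop (nhds 0) := by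
    rw [← ENNReal.ofReal_zero]
    exact ENNReal.tendsto_ofReal hbound0
  refine tendsto_of_tendsto_of_tendsto_of_le_of_le' tendsto_const_nhds hupper ?_ ?_
  · filter_upwards with n using zero_le
  · filter_upwards [eventually_ge_atTop 2] with n hn using key n hn
end
end
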